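/- arXiv:1307.0676 — 6 statements merged into one kernel-verified Lean document; each statement's English description precedes it below -/
import Mathlib

section
/- Let M and N be upper triangular k×k matrices over K[x] satisfying M·N = x²·Id. Then either there exist invertible upper triangular matrices G and H over K[x] such that G·M·H is a diagonal matrix each of whose diagonal entries equals 1 or x, or M admits a critical vector of degree 2. -/
open Polynomial

namespace Statement1Aux

variable {K : Type*} [Field K] {k : ℕ}

/-- Extend a `k × k` matrix by a last column `c` and corner entry `m`, with zero last row. -/
noncomputable def extm (A : Matrix (Fin k) (Fin k) (Polynomial K)) (c : Fin k → Polynomial K)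
    (m : Polynomial K) : Matrix (Fin (k+1)) (Fin (k+1)) (Polynomial K) :=
  Matrix.of fun i j =>
    Fin.lastCases (Fin.lastCases m (fun _ => (0 : Polynomial K)) j)
      (fun i' => Fin.lastCases (c i') (fun j' => A i' j') j) i

variable {A B : Matrix (Fin k) (Fin k) (Polynomial K)} {c d : Fin k → Polynomial K}
  {m n : Polynomial K}

@[simp] lemma ext_cc (i j : Fin k) : extm A c m i.castSucc j.castSucc = A i j := by
  simp [extm]

@[simp] lemma ext_cl (i : Fin k) : extm A c m i.castSucc (Fin.last k) = c i := by
  simp [extm]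

@[simp] lemma ext_lc (j : Fin k) : extm A c m (Fin.last k) j.castSucc = 0 := by
  simp [extm]

@[simp] lemma ext_ll : extm A c m (Fin.last k) (Fin.last k) = m := by
  simp [extm]

lemma ext_mul : extm A c m * extm B d n = extm (A * B) (A.mulVec d + n • c) (m * n) := by
  ext i j
  rw [Matrix.mul_apply]
  induction i using Fin.lastCases <;> induction j using Fin.lastCases <;>
    simp [Fin.sum_univ_castSucc, Matrix.mul_apply, Matrix.mulVec, dotProduct, mul_comm]

lemma ext_one : extm (1 : Matrix (Fin k) (Fin k) (Polynomial K)) 0 1 = 1 := by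
  ext i j
  induction i using Fin.lastCases <;> induction j using Fin.lastCases <;>
    simp [Matrix.one_apply, Fin.castSucc_inj, (Fin.castSucc_lt_last _).ne,
      (Fin.castSucc_lt_last _).ne']

lemma ext_smul_one (r : Polynomial K) :
    r • (1 : Matrix (Fin (k+1)) (Fin (k+1)) (Polynomial K)) = extm (r • 1) 0 r := by
  ext i j
  induction i using Fin.lastCases <;> induction j using Fin.lastCases <;>
    simp [Matrix.one_apply, Fin.castSucc_inj, (Fin.castSucc_lt_last _).ne,
      (Fin.castSucc_lt_last _).ne']

lemma ext_isUnit (hA : IsUnit A) (hm : IsUnit m) : IsUnit (extm A c m) := by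
  obtain ⟨B, hB1, hB2⟩ := isUnit_iff_exists.mp hA
  obtain ⟨t, ht1, ht2⟩ := isUnit_iff_exists.mp hm
  refine isUnit_iff_exists.mpr ⟨extm B ((-t) • B.mulVec c) t, ?_, ?_⟩
  · have hcol : A.mulVec ((-t) • B.mulVec c) + t • c = 0 := by
      rw [Matrix.mulVec_smul, Matrix.mulVec_mulVec, hB1, Matrix.one_mulVec]
      funext i; simp
    rw [ext_mul, hB1, ht1, hcol, ext_one]
  · have hcol : B.mulVec c + m • ((-t) • (B.mulVec c)) = 0 := by
      funext i
      simp only [Pi.add_apply, Pi.smul_apply, smul_eq_mul, Pi.zero_apply, neg_smul, Pi.neg_apply]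
      linear_combination (-(B.mulVec c i)) * ht1
    rw [ext_mul, hB2, ht2, hcol, ext_one]

lemma ext_blockTriangular (hA : A.BlockTriangular id) :
    (extm A c m).BlockTriangular id := by
  intro i j hij
  induction i using Fin.lastCases with
  | last =>
    induction j using Fin.lastCases with
    | last => exact absurd hij (lt_irrefl _)
    | cast j' => simp
  | cast i' =>
    induction j using Fin.lastCases with
    | last => exact absurd hij (not_lt.mpr (Fin.le_last _))
    | cast j' => simpa using hA (show (id j' : Fin k) < id i' from Fin.castSucc_lt_castSucc_iff.mp hij)

lemma eq_ext {M : Matrix (Fin (k+1)) (Fin (k+1)) (Polynomial K)} (hM : M.BlockTriangular id) :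
    M = extm (M.submatrix Fin.castSucc Fin.castSucc) (fun i => M i.castSucc (Fin.last k))
      (M (Fin.last k) (Fin.last k)) := by
  refine Matrix.ext fun i j => ?_
  induction i using Fin.lastCases with
  | last =>
    induction j using Fin.lastCases with
    | last => simp
    | cast j' =>
      rw [ext_lc]
      exact hM (show (id (j'.castSucc) : Fin (k+1)) < id (Fin.last k) from Fin.castSucc_lt_last j')
  | cast i' =>
    induction j using Fin.lastCases with
    | last => simp
    | cast j' => simp

lemma ext_conj (P Q : Matrix (Fin k) (Fin k) (Polynomial K)) (p q : Fin k → Polynomial K)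
    (s r : Polynomial K) :
    (extm P p s) * (extm A c m) * (extm Q q r) =
      extm (P * A * Q) ((P*A).mulVec q + r • (P.mulVec c + m • p)) (s * m * r) := by
  rw [ext_mul, ext_mul]

lemma ext_goal {D : Matrix (Fin k) (Fin k) (Polynomial K)}
    (hoff : ∀ i j, i ≠ j → D i j = 0) (hdiag : ∀ i, D i i = 1 ∨ D i i = X)
    {r : Polynomial K} (hr : r = 1 ∨ r = X) :
    (∀ i j, i ≠ j → extm D 0 r i j = 0) ∧
      (∀ i, extm D 0 r i i = 1 ∨ extm D 0 r i i = X) := by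
  constructor
  · intro i j hij
    induction i using Fin.lastCases with
    | last =>
      induction j using Fin.lastCases with
      | last => exact absurd rfl hij
      | cast j' => simp
    | cast i' =>
      induction j using Fin.lastCases with
      | last => simp
      | cast j' =>
        rw [ext_cc]
        exact hoff i' j' (fun h => hij (by rw [h]))
  · intro i
    induction i using Fin.lastCases with
    | last => simpa using hr
    | cast i' => simpa using hdiag i'

/-- Key lemma: a triangular matrix `M` with a triangular complement `N` such that `M·N = x·Id`
can be brought into diagonal form with entries `1` or `x` by triangular unit transformations. -/
theorem key : ∀ (k : ℕ) (M N : Matrix (Fin k) (Fin k) (Polynomial K)),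
    M.BlockTriangular id → N.BlockTriangular id →
    M * N = (X : Polynomial K) • (1 : Matrix (Fin k) (Fin k) (Polynomial K)) →
    ∃ G H : Matrix (Fin k) (Fin k) (Polynomial K),
      IsUnit G ∧ IsUnit H ∧ G.BlockTriangular id ∧ H.BlockTriangular id ∧
      (∀ i j, i ≠ j → (G * M * H) i j = 0) ∧
      (∀ i, (G * M * H) i i = 1 ∨ (G * M * H) i i = X) := by
  intro k
  induction k with
  | zero =>
    intro M N _ _ _
    exact ⟨1, 1, isUnit_one, isUnit_one, Matrix.blockTriangular_one,
      Matrix.blockTriangular_one, fun i => i.elim0, fun i => i.elim0⟩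
  | succ k IH =>
    intro M N hM hN hMN
    set A := M.submatrix Fin.castSucc Fin.castSucc with hA
    set c : Fin k → Polynomial K := fun i => M i.castSucc (Fin.last k) with hc
    set m := M (Fin.last k) (Fin.last k) with hm
    set B := N.submatrix Fin.castSucc Fin.castSucc with hB
    set d : Fin k → Polynomial K := fun i => N i.castSucc (Fin.last k) with hd
    set n := N (Fin.last k) (Fin.last k) with hn
    have hMext : M = extm A c m := eq_ext hM
    have hNext : N = extm B d n := eq_ext hN
    have hprod : extm (A*B) (A.mulVec d + n • c) (m*n) = extm ((X : Polynomial K) • 1) 0 X := by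
      rw [← ext_mul, ← hMext, ← hNext, hMN, ext_smul_one]
    have hAB : A * B = (X : Polynomial K) • (1 : Matrix (Fin k) (Fin k) (Polynomial K)) := by
      refine Matrix.ext fun i j => ?_
      have := congrFun (congrFun hprod i.castSucc) j.castSucc
      rw [ext_cc, ext_cc] at this
      simpa using this
    have hcol : A.mulVec d + n • c = 0 := by
      funext i
      have := congrFun (congrFun hprod i.castSucc) (Fin.last k)
      rw [ext_cl, ext_cl] at this
      simpa using this
    have hmn : m * n = X := by
      have := congrFun (congrFun hprod (Fin.last k)) (Fin.last k)
      rwa [ext_ll, ext_ll] at this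
    have hAt : A.BlockTriangular id := fun i j h =>
      hM (show (id (Fin.castSucc j) : Fin (k+1)) < id (Fin.castSucc i) from
        Fin.castSucc_lt_castSucc_iff.mpr h)
    have hBt : B.BlockTriangular id := fun i j h =>
      hN (show (id (Fin.castSucc j) : Fin (k+1)) < id (Fin.castSucc i) from
        Fin.castSucc_lt_castSucc_iff.mpr h)
    obtain ⟨G', H', hG'u, hH'u, hG't, hH't, hDoff, hDdiag⟩ := IH A B hAt hBt hAB
    set D := G' * A * H' with hD
    set c₁ := G'.mulVec c with hc₁
    have hrel : (G' * A).mulVec d + n • c₁ = 0 := by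
      have h0 : G'.mulVec (A.mulVec d + n • c) = 0 := by rw [hcol, Matrix.mulVec_zero]
      rwa [Matrix.mulVec_add, Matrix.mulVec_smul, Matrix.mulVec_mulVec] at h0
    rcases (Polynomial.irreducible_X (R := K)).isUnit_or_isUnit hmn.symm with hmu | hnu
    · -- m is a unit
      obtain ⟨t, ht1, ht2⟩ := isUnit_iff_exists.mp hmu
      refine ⟨extm G' ((-t) • c₁) t, extm H' 0 1, ext_isUnit hG'u (isUnit_iff_exists.mpr ⟨m, ht2, ht1⟩),
        ext_isUnit hH'u isUnit_one, ext_blockTriangular hG't, ext_blockTriangular hH't, ?_⟩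
      have hGMH : extm G' ((-t) • c₁) t * M * extm H' 0 1 = extm D 0 1 := by
        rw [hMext, ext_conj]
        have h1 : (G' * A).mulVec 0 + (1 : Polynomial K) • (G'.mulVec c + m • ((-t) • c₁)) = 0 := by
          funext i
          simp only [Matrix.mulVec_zero, Pi.zero_apply, zero_add, one_smul, Pi.add_apply,
            Pi.smul_apply, smul_eq_mul, neg_smul, Pi.neg_apply, ← hc₁]
          linear_combination (-(c₁ i)) * ht2
        rw [h1, mul_one, ht2]
      rw [hGMH]
      exact ext_goal hDoff hDdiag (Or.inl rfl)
    · -- n is a unit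
      refine ⟨extm G' 0 1, extm H' d n, ext_isUnit hG'u isUnit_one,
        ext_isUnit hH'u hnu, ext_blockTriangular hG't, ext_blockTriangular hH't, ?_⟩
      have hGMH : extm G' 0 1 * M * extm H' d n = extm D 0 X := by
        rw [hMext, ext_conj]
        have h1 : (G' * A).mulVec d + n • (G'.mulVec c + m • (0 : Fin k → Polynomial K)) = 0 := by
          rw [smul_zero, add_zero, ← hc₁]
          exact hrel
        rw [h1, one_mul, hmn]
      rw [hGMH]
      exact ext_goal hDoff hDdiag (Or.inr rfl)

end Statement1Aux

/-- A vector `v ∈ K[x]^k` is basis-adapted if its coordinates generate the unit ideal of `K[x]`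
(equivalently, `v` is part of a `K[x]`-basis of `K[x]^k`). -/
def BasisAdapted {K : Type*} [Field K] {k : ℕ} (v : Fin k → Polynomial K) : Prop :=
  Ideal.span (Set.range v) = ⊤

/-- A vector `v ∈ K[x]^k` is critical of degree `d` for `M` if `v` is basis-adapted and
`M·v = x^d·w` for some basis-adapted vector `w`. -/
def IsCritical {K : Type*} [Field K] {k : ℕ}
    (M : Matrix (Fin k) (Fin k) (Polynomial K)) (d : ℕ) (v : Fin k → Polynomial K) : Prop :=
  BasisAdapted v ∧ ∃ w : Fin k → Polynomial K, BasisAdapted w ∧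
    M.mulVec v = (X : Polynomial K) ^ d • w

/-- If `M` and `N` are upper triangular `k × k` matrices over `K[x]` with `M·N = x²·Id`, then
either there exist invertible upper triangular matrices `G`, `H` such that `G·M·H` is diagonal
with all diagonal entries equal to `1` or `x`, or `M` admits a critical vector of degree `2`. -/
theorem statement1 {K : Type*} [Field K] {k : ℕ}
    (M N : Matrix (Fin k) (Fin k) (Polynomial K))
    (hM : M.BlockTriangular id) (hN : N.BlockTriangular id)
    (hMN : M * N = (X : Polynomial K) ^ 2 • (1 : Matrix (Fin k) (Fin k) (Polynomial K))) :
    (∃ G H : Matrix (Fin k) (Fin k) (Polynomial K),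
      IsUnit G ∧ IsUnit H ∧ G.BlockTriangular id ∧ H.BlockTriangular id ∧
      (∀ i j, i ≠ j → (G * M * H) i j = 0) ∧
      (∀ i, (G * M * H) i i = 1 ∨ (G * M * H) i i = X)) ∨
    (∃ v : Fin k → Polynomial K, IsCritical M 2 v) := by
  by_cases hc : ∀ i j, (N i j).coeff 0 = 0
  · -- every entry of `N` is divisible by `x`: use the key reduction lemma
    left
    set N₂ : Matrix (Fin k) (Fin k) (Polynomial K) := Matrix.of fun i j => (N i j).divX with hN₂
    have hNX : N = (X : Polynomial K) • N₂ := by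
      refine Matrix.ext fun i j => ?_
      have h1 := Polynomial.X_mul_divX_add (N i j)
      rw [hc i j, map_zero, add_zero] at h1
      simpa [hN₂] using h1.symm
    have hN₂t : N₂.BlockTriangular id := by
      intro i j h
      have h0 := hN h
      simp [hN₂, h0]
    have hMN₂ : M * N₂ = (X : Polynomial K) • (1 : Matrix (Fin k) (Fin k) (Polynomial K)) := by
      have h1 : (X : Polynomial K) • (M * N₂) =
          (X : Polynomial K) • ((X : Polynomial K) • (1 : Matrix (Fin k) (Fin k) (Polynomial K))) := by
        rw [← Matrix.mul_smul, ← hNX, hMN, smul_smul, ← sq]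
      refine Matrix.ext fun i j => ?_
      have h2 := congrFun (congrFun h1 i) j
      simp only [Matrix.smul_apply, smul_eq_mul] at h2
      exact mul_left_cancel₀ Polynomial.X_ne_zero h2
    exact Statement1Aux.key k M N₂ hM hN₂t hMN₂
  · -- some entry of `N` has nonzero constant term: the corresponding column of `N` is critical
    right
    push_neg at hc
    obtain ⟨i₀, j, hij⟩ := hc
    set v : Fin k → Polynomial K := fun i => N i j with hv
    have hMv : M.mulVec v = (X : Polynomial K) ^ 2 • (Pi.single j 1 : Fin k → Polynomial K) := by
      funext i
      have h1 : M.mulVec v i = (M * N) i j := by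
        simp [Matrix.mulVec, dotProduct, Matrix.mul_apply, hv]
      rw [h1, hMN]
      simp [Matrix.one_apply, Pi.single_apply]
    have hsingle : BasisAdapted (Pi.single j (1 : Polynomial K)) :=
      Ideal.eq_top_iff_one _ |>.mpr (Ideal.subset_span ⟨j, Pi.single_eq_same j 1⟩)
    have hBA : BasisAdapted v := by
      unfold BasisAdapted
      obtain ⟨g, hg⟩ := Submodule.IsPrincipal.principal (Ideal.span (Set.range v))
      have hdvd : ∀ i, g ∣ v i := by
        intro i
        have hmem : v i ∈ Ideal.span (Set.range v) := Ideal.subset_span ⟨i, rfl⟩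
        rw [hg] at hmem
        exact Ideal.mem_span_singleton.mp hmem
      have hgX : g ∣ (X : Polynomial K) ^ 2 := by
        have h2 : (X : Polynomial K) ^ 2 = M.mulVec v j := by
          rw [hMv]
          simp
        rw [h2]
        simp only [Matrix.mulVec, dotProduct]
        exact Finset.dvd_sum fun l _ => (hdvd l).mul_left (M j l)
      have hgu : IsUnit g := by
        by_contra hgu
        have hXg : (X : Polynomial K) ∣ g := by
          obtain ⟨i, hi, hassoc⟩ := (dvd_prime_pow (Polynomial.prime_X (R := K)) 2).mp hgX
          rcases Nat.eq_zero_or_pos i with h0 | h0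
          · exact absurd (associated_one_iff_isUnit.mp (by simpa [h0] using hassoc)) hgu
          · exact (dvd_pow_self (X : Polynomial K) h0.ne').trans hassoc.symm.dvd
        exact hij (Polynomial.X_dvd_iff.mp (hXg.trans (hdvd i₀)))
      rw [hg]
      exact Ideal.span_singleton_eq_top.mpr hgu
    exact ⟨v, hBA, Pi.single j 1, hsingle, hMv⟩
end

section
/- The set Λ is a K[x]-subalgebra of the matrix algebra M_n(K(x)) containing the identity matrix (where K[x] embeds via p ↦ p·Id), and Λ is a free K[x]-module of rank n². In particular, Λ is an R-order for R = K[x]. -/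
open Polynomial Matrix

noncomputable section

/-- The exponent `c_{ij}` (with 0-based indices `i j : Fin n`, corresponding to the 1-based
`c_{i+1,j+1} = δ_{i+1>j+1} + δ_{i+1>j+2} − δ_{(i+1,j+1)=(1,n)}`). -/
def cExp (n : ℕ) (i j : Fin n) : ℤ :=
  (if (j : ℕ) < (i : ℕ) then 1 else 0) + (if (j : ℕ) + 1 < (i : ℕ) then 1 else 0)
    - (if (i : ℕ) = 0 ∧ (j : ℕ) = n - 1 then 1 else 0)

/-- The subset `x^c · K[x]` of `K(x)`. -/
def xPow (K : Type*) [Field K] (c : ℤ) : Set (RatFunc K) :=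
  {f | ∃ p : Polynomial K, f = RatFunc.X ^ c * algebraMap (Polynomial K) (RatFunc K) p}

/-- The carrier set of the tiled order `Λ ⊆ M_n(K(x))`:
matrices whose `(i,j)` entry lies in `x^{c_{ij}}·K[x]`. -/
def lambdaCarrier (K : Type*) [Field K] (n : ℕ) : Set (Matrix (Fin n) (Fin n) (RatFunc K)) :=
  {M | ∀ i j, M i j ∈ xPow K (cExp n i j)}

namespace TiledAux

variable {K : Type*} [Field K]

lemma mem_xPow_of_le {c d : ℤ} (h : c ≤ d) (p : Polynomial K) :
    (RatFunc.X : RatFunc K) ^ d * algebraMap (Polynomial K) (RatFunc K) p ∈ xPow K c := by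
  refine ⟨Polynomial.X ^ (d - c).toNat * p, ?_⟩
  rw [_root_.map_mul, map_pow, RatFunc.algebraMap_X, ← mul_assoc, ← zpow_natCast (RatFunc.X : RatFunc K),
    ← zpow_add₀ RatFunc.X_ne_zero]
  congr 2
  omega

lemma zero_mem_xPow (c : ℤ) : (0 : RatFunc K) ∈ xPow K c := ⟨0, by simp⟩

lemma add_mem_xPow {c : ℤ} {a b : RatFunc K} (ha : a ∈ xPow K c) (hb : b ∈ xPow K c) :
    a + b ∈ xPow K c := by
  obtain ⟨p, rfl⟩ := ha; obtain ⟨q, rfl⟩ := hb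
  exact ⟨p + q, by rw [_root_.map_add]; ring⟩

lemma smul_mem_xPow {c : ℤ} (r : Polynomial K) {a : RatFunc K} (ha : a ∈ xPow K c) :
    r • a ∈ xPow K c := by
  obtain ⟨p, rfl⟩ := ha
  exact ⟨r * p, by rw [Algebra.smul_def, _root_.map_mul]; ring⟩

lemma mul_mem_xPow {c d e : ℤ} (h : e ≤ c + d) {a b : RatFunc K}
    (ha : a ∈ xPow K c) (hb : b ∈ xPow K d) : a * b ∈ xPow K e := by
  obtain ⟨p, rfl⟩ := ha; obtain ⟨q, rfl⟩ := hb
  have : RatFunc.X ^ c * algebraMap (Polynomial K) (RatFunc K) p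
      * (RatFunc.X ^ d * algebraMap (Polynomial K) (RatFunc K) q)
      = RatFunc.X ^ (c + d) * algebraMap (Polynomial K) (RatFunc K) (p * q) := by
    rw [zpow_add₀ (RatFunc.X_ne_zero (K := K)), _root_.map_mul]; ring
  rw [this]
  exact mem_xPow_of_le h _

/-- The submodule `x^c K[x]`. -/
def xSub (K : Type*) [Field K] (c : ℤ) : Submodule (Polynomial K) (RatFunc K) where
  carrier := xPow K c
  add_mem' := add_mem_xPow
  zero_mem' := zero_mem_xPow c
  smul_mem' r _ := smul_mem_xPow r

lemma cExp_diag {n : ℕ} (hn : 3 ≤ n) (i : Fin n) : cExp n i i = 0 := by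
  have hi := i.isLt
  simp only [cExp]
  split_ifs <;> omega

lemma cExp_triangle {n : ℕ} (hn : 3 ≤ n) (i j k : Fin n) :
    cExp n i k ≤ cExp n i j + cExp n j k := by
  have hi := i.isLt; have hj := j.isLt; have hk := k.isLt
  simp only [cExp]
  split_ifs <;> omega

variable (K)

/-- The tiled order as a subalgebra. -/
def Lambda (n : ℕ) (hn : 3 ≤ n) : Subalgebra (Polynomial K) (Matrix (Fin n) (Fin n) (RatFunc K)) where
  carrier := lambdaCarrier K n
  add_mem' hM hN i j := add_mem_xPow (hM i j) (hN i j)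
  mul_mem' {M N} hM hN i k := by
    rw [Matrix.mul_apply]
    exact Submodule.sum_mem (xSub K (cExp n i k)) fun j _ =>
      mul_mem_xPow (cExp_triangle hn i j k) (hM i j) (hN j k)
  zero_mem' i j := zero_mem_xPow _
  one_mem' i j := by
    by_cases h : i = j
    · subst h
      rw [Matrix.one_apply_eq]
      exact ⟨1, by rw [cExp_diag hn, _root_.map_one, zpow_zero, mul_one]⟩
    · rw [Matrix.one_apply_ne h]
      exact zero_mem_xPow _
  algebraMap_mem' r i j := by
    rw [Matrix.algebraMap_matrix_apply]
    by_cases h : i = j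
    · subst h
      rw [if_pos rfl]
      exact ⟨r, by rw [cExp_diag hn, zpow_zero, one_mul]⟩
    · rw [if_neg h]
      exact zero_mem_xPow _

/-- The basis-change linear map. -/
def phi (n : ℕ) : Matrix (Fin n) (Fin n) (Polynomial K)
    →ₗ[Polynomial K] Matrix (Fin n) (Fin n) (RatFunc K) where
  toFun P := Matrix.of fun i j =>
    (RatFunc.X : RatFunc K) ^ cExp n i j * algebraMap (Polynomial K) (RatFunc K) (P i j)
  map_add' P Q := by
    ext i j
    simp [Matrix.add_apply, map_add, mul_add]
  map_smul' r P := by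
    ext i j
    simp only [Matrix.of_apply, Matrix.smul_apply, RingHom.id_apply, smul_eq_mul, _root_.map_mul,
      Algebra.smul_def]
    ring

lemma phi_injective (n : ℕ) : Function.Injective (phi K n) := by
  rw [injective_iff_map_eq_zero]
  intro P hP
  refine Matrix.ext fun i j => ?_
  have h := congrFun (congrFun hP i) j
  simp only [phi, LinearMap.coe_mk, AddHom.coe_mk, Matrix.of_apply, Matrix.zero_apply] at h
  rcases mul_eq_zero.mp h with h' | h'
  · exact absurd h' (zpow_ne_zero _ RatFunc.X_ne_zero)
  · exact RatFunc.algebraMap_injective K (by simpa using h')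

lemma phi_range (n : ℕ) (hn : 3 ≤ n) :
    LinearMap.range (phi K n) = Subalgebra.toSubmodule (Lambda K n hn) := by
  ext M
  constructor
  · rintro ⟨P, rfl⟩ i j
    exact ⟨P i j, rfl⟩
  · intro hM
    refine ⟨Matrix.of fun i j => (hM i j).choose, ?_⟩
    ext i j
    exact ((hM i j).choose_spec).symm

end TiledAux

/-- The set `Λ` is a `K[x]`-subalgebra of `M_n(K(x))` (in particular it contains the identity
matrix, `K[x]` embedding via `p ↦ p·Id`), and it is a free `K[x]`-module of rank `n²`.
In particular `Λ` is a `K[x]`-order. -/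
theorem statement3 (K : Type*) [Field K] (n : ℕ) (hn : 3 ≤ n) :
    ∃ Λ : Subalgebra (Polynomial K) (Matrix (Fin n) (Fin n) (RatFunc K)),
      (Λ : Set (Matrix (Fin n) (Fin n) (RatFunc K))) = lambdaCarrier K n ∧
      Module.Free (Polynomial K) ↥Λ ∧
      Module.finrank (Polynomial K) ↥Λ = n ^ 2 := by
  have e : Matrix (Fin n) (Fin n) (Polynomial K) ≃ₗ[Polynomial K]
      ↥(Subalgebra.toSubmodule (TiledAux.Lambda K n hn)) :=
    (LinearEquiv.ofInjective _ (TiledAux.phi_injective K n)).trans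
      (LinearEquiv.ofEq _ _ (TiledAux.phi_range K n hn))
  refine ⟨TiledAux.Lambda K n hn, rfl, Module.Free.of_equiv e, ?_⟩
  have h1 : Module.finrank (Polynomial K)
      ↥(Subalgebra.toSubmodule (TiledAux.Lambda K n hn)) = n ^ 2 := by
    rw [← e.finrank_eq, Module.finrank_matrix]
    simp [sq]
  exact h1
end
end

section
/- For any 1 ≤ s < t ≤ n and 1 ≤ u < v ≤ n, the K[x]-module Hom_Λ((s,t),(u,v)) of Λ-module homomorphisms is a free K[x]-module of rank 1. In particular, the endomorphism ring End_Λ((s,t)) of each indecomposable Cohen–Macaulay Λ-module is isomorphic to K[x]. -/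
set_option synthInstance.maxHeartbeats 1000000
set_option maxHeartbeats 1000000

open Polynomial Matrix

noncomputable section

/-- Exponent pattern of the module `(i,j)` (1-based `i j`; `k : ℕ` is a 0-based coordinate,
so the 1-based coordinate is `k+1`): `0` for `k+1 ≤ i`, `1` for `i < k+1 ≤ j`, `2` otherwise. -/
def dExp (i j k : ℕ) : ℤ := if k + 1 ≤ i then 0 else if k + 1 ≤ j then 1 else 2

/-- The carrier set of the `Λ`-module `(i,j)` inside the column space `K(x)^n`. -/
def ijSet (K : Type*) [Field K] (n : ℕ) (i j : ℕ) : Set (Fin n → RatFunc K) :=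
  {v | ∀ k : Fin n, v k ∈ xPow K (dExp i j (k : ℕ))}

/-- Column vectors form a module over the matrix ring via `mulVec`. -/
instance matVecModule (K : Type*) [Field K] (n : ℕ) :
    Module (Matrix (Fin n) (Fin n) (RatFunc K)) (Fin n → RatFunc K) where
  smul M v := M.mulVec v
  one_smul v := Matrix.one_mulVec v
  mul_smul M N v := (Matrix.mulVec_mulVec v M N).symm
  smul_zero M := Matrix.mulVec_zero M
  smul_add M u v := Matrix.mulVec_add M u v
  add_smul M N v := Matrix.add_mulVec M N v
  zero_smul v := Matrix.zero_mulVec v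
namespace St7

variable {K : Type} [Field K]

lemma X_ne : (RatFunc.X : RatFunc K) ≠ 0 := RatFunc.X_ne_zero

lemma zpow_ne (a : ℤ) : (RatFunc.X : RatFunc K) ^ a ≠ 0 := zpow_ne_zero a X_ne

lemma algX_pow (m : ℕ) :
    algebraMap (Polynomial K) (RatFunc K) (Polynomial.X ^ m) = RatFunc.X ^ (m : ℤ) := by
  rw [map_pow, RatFunc.algebraMap_X, zpow_natCast]

lemma xpow_mem {a c : ℤ} (h : c ≤ a) : (RatFunc.X : RatFunc K) ^ a ∈ xPow K c := by
  refine ⟨Polynomial.X ^ (a - c).toNat, ?_⟩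
  rw [algX_pow, Int.toNat_of_nonneg (by omega), ← zpow_add₀ X_ne]
  congr 1
  omega

lemma zero_mem (c : ℤ) : (0 : RatFunc K) ∈ xPow K c := ⟨0, by simp⟩

lemma mono {c d : ℤ} (h : d ≤ c) {f : RatFunc K} (hf : f ∈ xPow K c) : f ∈ xPow K d := by
  obtain ⟨p, rfl⟩ := hf
  refine ⟨Polynomial.X ^ (c - d).toNat * p, ?_⟩
  rw [_root_.map_mul, algX_pow, Int.toNat_of_nonneg (by omega), ← mul_assoc, ← zpow_add₀ X_ne]
  congr 2
  omega

lemma mul_mem {a c : ℤ} {f : RatFunc K} (hf : f ∈ xPow K c) :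
    RatFunc.X ^ a * f ∈ xPow K (a + c) := by
  obtain ⟨p, rfl⟩ := hf
  exact ⟨p, by rw [← mul_assoc, ← zpow_add₀ X_ne]⟩

lemma exists_poly {c : ℤ} (hc : 0 ≤ c) {f : RatFunc K} (hf : f ∈ xPow K c) :
    ∃ p : Polynomial K, f = algebraMap (Polynomial K) (RatFunc K) p := by
  obtain ⟨p, hp⟩ := mono hc hf
  exact ⟨p, by simpa using hp⟩

lemma d_nonneg (i j k : ℕ) : 0 ≤ dExp i j k := by unfold dExp; split_ifs <;> norm_num

lemma d_le_two (i j k : ℕ) : dExp i j k ≤ 2 := by unfold dExp; split_ifs <;> norm_num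

lemma c_le_two (n : ℕ) (i j : Fin n) : cExp n i j ≤ 2 := by
  unfold cExp; split_ifs <;> norm_num

lemma c_diag (n : ℕ) (hn : 3 ≤ n) (i : Fin n) : cExp n i i = 0 := by
  unfold cExp
  rw [if_neg (by omega), if_neg (by omega), if_neg (by omega)]
  ring

end St7
namespace St7

variable {K : Type} [Field K] {n : ℕ}

/-- single-entry vector -/
def sv (i : Fin n) (f : RatFunc K) : Fin n → RatFunc K := fun k => if k = i then f else 0

/-- single-entry matrix -/
def sm (i j : Fin n) (c : RatFunc K) : Matrix (Fin n) (Fin n) (RatFunc K) :=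
  fun a b => if a = i ∧ b = j then c else 0

lemma sv_same (i : Fin n) (f : RatFunc K) : sv i f i = f := by simp [sv]

lemma sv_other {i k : Fin n} (h : k ≠ i) (f : RatFunc K) : sv i f k = 0 := by simp [sv, h]

lemma sm_mulVec (i j : Fin n) (c : RatFunc K) (w : Fin n → RatFunc K) :
    sm i j c *ᵥ w = sv i (c * w j) := by
  funext a
  simp only [Matrix.mulVec, dotProduct, sm, sv]
  by_cases h : a = i
  · subst h
    simp only [true_and, if_true, ite_mul, zero_mul]
    rw [Finset.sum_ite_eq' Finset.univ j (fun b => c * w b)]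
    simp
  · simp [h]

lemma sv_mem_ijSet {s t : ℕ} {i : Fin n} {f : RatFunc K}
    (hf : f ∈ xPow K (dExp s t (i : ℕ))) : sv i f ∈ ijSet K n s t := by
  intro k
  by_cases h : k = i
  · subst h; rw [sv_same]; exact hf
  · rw [sv_other h]; exact zero_mem _

end St7
set_option maxHeartbeats 4000000
namespace St7

lemma algX2 {K : Type} [Field K] :
    algebraMap (Polynomial K) (RatFunc K) (Polynomial.X ^ 2) = RatFunc.X ^ (2 : ℤ) := by
  rw [algX_pow]; norm_num

lemma master {K : Type} [Field K] {n : ℕ} (hn : 3 ≤ n)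
    (Λ : Subalgebra (Polynomial K) (Matrix (Fin n) (Fin n) (RatFunc K)))
    (hΛ : (Λ : Set (Matrix (Fin n) (Fin n) (RatFunc K))) = lambdaCarrier K n)
    (S T : Submodule ↥Λ (Fin n → RatFunc K))
    (s t u v : ℕ)
    (hS : (S : Set (Fin n → RatFunc K)) = ijSet K n s t)
    (hT : (T : Set (Fin n → RatFunc K)) = ijSet K n u v)
    (e : ℤ)
    (he1 : ∀ k : Fin n, dExp u v (k : ℕ) ≤ e + dExp s t (k : ℕ))
    (he2 : ∃ k : Fin n, e + dExp s t (k : ℕ) ≤ dExp u v (k : ℕ)) :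
    ∃ f₀ : ↥S →ₗ[↥Λ] ↥T,
      (∀ (m : ↥S) (k : Fin n),
        ((f₀ m : Fin n → RatFunc K) k) = RatFunc.X ^ e * (m : Fin n → RatFunc K) k) ∧
      ∀ g : ↥S →ₗ[↥Λ] ↥T, ∃! p : Polynomial K,
        ∀ m : ↥S, g m = algebraMap (Polynomial K) ↥Λ p • f₀ m := by
  have hSmem : ∀ w : Fin n → RatFunc K, w ∈ S ↔ w ∈ ijSet K n s t :=
    fun w => Iff.trans (SetLike.mem_coe).symm (Set.ext_iff.mp hS w)
  have hTmem : ∀ w : Fin n → RatFunc K, w ∈ T ↔ w ∈ ijSet K n u v :=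
    fun w => Iff.trans (SetLike.mem_coe).symm (Set.ext_iff.mp hT w)
  have hΛmem : ∀ M : Matrix (Fin n) (Fin n) (RatFunc K),
      M ∈ Λ ↔ ∀ i j, M i j ∈ xPow K (cExp n i j) :=
    fun M => Iff.trans (SetLike.mem_coe).symm (Set.ext_iff.mp hΛ M)
  have hsmul : ∀ (A : ↥Λ) (w : Fin n → RatFunc K),
      A • w = (A : Matrix (Fin n) (Fin n) (RatFunc K)) *ᵥ w := fun _ _ => rfl
  have hscalΛ : ∀ p : Polynomial K,
      ((algebraMap (Polynomial K) ↥Λ p : ↥Λ) : Matrix (Fin n) (Fin n) (RatFunc K))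
        = algebraMap (Polynomial K) (Matrix (Fin n) (Fin n) (RatFunc K)) p := fun p => rfl
  have hscal : ∀ (p : Polynomial K) (w : Fin n → RatFunc K),
      (algebraMap (Polynomial K) ↥Λ p) • w
        = fun a => algebraMap (Polynomial K) (RatFunc K) p * w a := by
    intro p w
    funext a
    rw [hsmul, hscalΛ, Matrix.algebraMap_eq_diagonal, Matrix.mulVec_diagonal]
    simp
  have hsmΛ : ∀ i j : Fin n, sm i j ((RatFunc.X : RatFunc K) ^ (2 : ℤ)) ∈ Λ := by
    intro i j
    rw [hΛmem]
    intro a b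
    unfold sm
    by_cases h : a = i ∧ b = j
    · rw [if_pos h]; exact xpow_mem (c_le_two n a b)
    · rw [if_neg h]; exact zero_mem _
  have hsvS : ∀ (i : Fin n) (a : ℤ), dExp s t (i : ℕ) ≤ a →
      sv i ((RatFunc.X : RatFunc K) ^ a) ∈ S :=
    fun i a ha => (hSmem _).mpr (sv_mem_ijSet (xpow_mem ha))
  -- the generator f₀ : multiplication by X^e
  have hmapT : ∀ m : ↥S, (fun k => RatFunc.X ^ e * (m : Fin n → RatFunc K) k) ∈ T := by
    intro m
    rw [hTmem]
    intro k
    exact mono (he1 k) (mul_mem ((hSmem _).mp m.2 k))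
  refine ⟨{ toFun := fun m => ⟨fun k => RatFunc.X ^ e * (m : Fin n → RatFunc K) k, hmapT m⟩
            map_add' := ?_
            map_smul' := ?_ }, ?_, ?_⟩
  · intro m m'
    apply Subtype.ext
    funext k
    show RatFunc.X ^ e * (((m : Fin n → RatFunc K) + (m' : Fin n → RatFunc K)) k) = _
    simp [mul_add]
  · intro A m
    simp only [RingHom.id_apply]
    apply Subtype.ext
    show (fun k => RatFunc.X ^ e * ((A • m : ↥S) : Fin n → RatFunc K) k)
      = ((A • (⟨fun k => RatFunc.X ^ e * (m : Fin n → RatFunc K) k, hmapT m⟩ : ↥T) : ↥T)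
          : Fin n → RatFunc K)
    rw [Submodule.coe_smul, Submodule.coe_smul, hsmul, hsmul]
    have h := Matrix.mulVec_smul (A : Matrix (Fin n) (Fin n) (RatFunc K))
      ((RatFunc.X : RatFunc K) ^ e) (m : Fin n → RatFunc K)
    funext k
    calc RatFunc.X ^ e * ((A : Matrix (Fin n) (Fin n) (RatFunc K)) *ᵥ (m : Fin n → RatFunc K)) k
        = (((RatFunc.X : RatFunc K) ^ e) • ((A : Matrix (Fin n) (Fin n) (RatFunc K)) *ᵥ (m : Fin n → RatFunc K))) k := rfl
      _ = ((A : Matrix (Fin n) (Fin n) (RatFunc K)) *ᵥ (((RatFunc.X : RatFunc K) ^ e) • (m : Fin n → RatFunc K))) k := by rw [h]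
      _ = ((A : Matrix (Fin n) (Fin n) (RatFunc K)) *ᵥ fun a => RatFunc.X ^ e * (m : Fin n → RatFunc K) a) k := rfl
  · intro m k; rfl
  -- now the main statement
  intro g
  set σ : Fin n → ↥S :=
    fun i => ⟨sv i ((RatFunc.X : RatFunc K) ^ (2 : ℤ)), hsvS i 2 (d_le_two s t i)⟩ with hσdef
  set h : Fin n → (Fin n → RatFunc K) := fun i => (g (σ i) : Fin n → RatFunc K) with hhdef
  have key : ∀ i j : Fin n, ∀ a : Fin n,
      (RatFunc.X : RatFunc K) ^ (2 : ℤ) * h i a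
        = sv i ((RatFunc.X : RatFunc K) ^ (2 : ℤ) * h j j) a := by
    intro i j a
    set A : ↥Λ := ⟨sm i j ((RatFunc.X : RatFunc K) ^ (2 : ℤ)), hsmΛ i j⟩ with hAdef
    have e1 : A • σ j = (algebraMap (Polynomial K) ↥Λ (Polynomial.X ^ 2)) • σ i := by
      apply Subtype.ext
      rw [Submodule.coe_smul, Submodule.coe_smul, hsmul, hscal]
      show sm i j ((RatFunc.X : RatFunc K) ^ (2 : ℤ)) *ᵥ sv j ((RatFunc.X : RatFunc K) ^ (2:ℤ)) = _
      rw [sm_mulVec, sv_same]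
      funext b
      rw [algX2]
      by_cases hb : b = i
      · subst hb
        show sv b ((RatFunc.X : RatFunc K) ^ (2:ℤ) * (RatFunc.X : RatFunc K) ^ (2:ℤ)) b
          = RatFunc.X ^ (2:ℤ) * sv b ((RatFunc.X : RatFunc K) ^ (2:ℤ)) b
        rw [sv_same, sv_same]
      · show sv i ((RatFunc.X : RatFunc K) ^ (2:ℤ) * (RatFunc.X : RatFunc K) ^ (2:ℤ)) b
          = RatFunc.X ^ (2:ℤ) * sv i ((RatFunc.X : RatFunc K) ^ (2:ℤ)) b
        rw [sv_other hb, sv_other hb, mul_zero]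
    have e2 := congrArg (fun z : ↥T => (z : Fin n → RatFunc K))
      ((g.map_smul A (σ j)).symm.trans ((congrArg g e1).trans
        (g.map_smul (algebraMap (Polynomial K) ↥Λ (Polynomial.X ^ 2)) (σ i))))
    -- e2 : A • (g (σ j)) = algebraMap (X^2) • g (σ i)   (as coe functions)
    simp only [Submodule.coe_smul] at e2
    rw [hsmul, hscal] at e2
    have e3 := congrFun e2 a
    have e4 : sv i ((RatFunc.X : RatFunc K) ^ (2:ℤ) * (g (σ j) : Fin n → RatFunc K) j) a
        = algebraMap (Polynomial K) (RatFunc K) (Polynomial.X ^ 2)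
            * (g (σ i) : Fin n → RatFunc K) a := by
      rw [← sm_mulVec]
      exact e3
    rw [algX2] at e4
    exact e4.symm
  have hi0 : 0 < n := by omega
  set i0 : Fin n := ⟨0, hi0⟩ with hi0def
  set lam : RatFunc K := h i0 i0 with hlamdef
  have hvec : ∀ i : Fin n, h i = sv i lam := by
    intro i
    funext a
    by_cases ha : a = i
    · subst ha
      rw [sv_same]
      exact mul_left_cancel₀ (zpow_ne 2) (by rw [key a i0 a, sv_same])
    · rw [sv_other ha]
      refine mul_left_cancel₀ (zpow_ne 2) ?_
      rw [key i i a, sv_other ha, mul_zero]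
  -- step C : g is multiplication by lam / X^2
  have stepC : ∀ (m : ↥S) (a : Fin n),
      (RatFunc.X : RatFunc K) ^ (2 : ℤ) * (g m : Fin n → RatFunc K) a
        = (m : Fin n → RatFunc K) a * lam := by
    intro m a
    have hm : ∀ k : Fin n, (m : Fin n → RatFunc K) k ∈ xPow K (dExp s t (k : ℕ)) :=
      (hSmem _).mp m.2
    choose P hP using fun k : Fin n => exists_poly (d_nonneg s t ((k : Fin n) : ℕ)) (hm k)
    have split : (algebraMap (Polynomial K) ↥Λ (Polynomial.X ^ 2)) • m
        = ∑ k : Fin n, (algebraMap (Polynomial K) ↥Λ (P k)) • σ k := by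
      apply Subtype.ext
      rw [Submodule.coe_smul, hscal, Submodule.coe_sum]
      funext b
      rw [Finset.sum_apply]
      have : ∀ k : Fin n, ((algebraMap (Polynomial K) ↥Λ (P k) • σ k : ↥S) : Fin n → RatFunc K) b
          = if b = k then algebraMap (Polynomial K) (RatFunc K) (P k) * RatFunc.X ^ (2:ℤ) else 0 := by
        intro k
        rw [Submodule.coe_smul, hscal]
        show algebraMap (Polynomial K) (RatFunc K) (P k) * sv k (RatFunc.X ^ (2:ℤ)) b = _
        by_cases hb : b = k
        · subst hb; rw [sv_same, if_pos rfl]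
        · rw [sv_other hb, if_neg hb, mul_zero]
      rw [Finset.sum_congr rfl (fun k _ => this k)]
      rw [Finset.sum_ite_eq Finset.univ b
        (fun k => algebraMap (Polynomial K) (RatFunc K) (P k) * RatFunc.X ^ (2:ℤ))]
      rw [if_pos (Finset.mem_univ b), ← hP b, algX2]
      ring
    have e4 : (algebraMap (Polynomial K) ↥Λ (Polynomial.X ^ 2)) • g m
        = ∑ k : Fin n, (algebraMap (Polynomial K) ↥Λ (P k)) • g (σ k) := by
      rw [← g.map_smul, split, map_sum]
      exact Finset.sum_congr rfl (fun k _ => g.map_smul _ _)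
    have e5 := congrArg (fun z : ↥T => (z : Fin n → RatFunc K)) e4
    simp only [Submodule.coe_smul] at e5
    rw [hscal, Submodule.coe_sum] at e5
    have e6 := congrFun e5 a
    rw [Finset.sum_apply] at e6
    have e7 : ∀ k : Fin n, ((algebraMap (Polynomial K) ↥Λ (P k) • g (σ k) : ↥T) : Fin n → RatFunc K) a
        = if a = k then algebraMap (Polynomial K) (RatFunc K) (P k) * lam else 0 := by
      intro k
      rw [Submodule.coe_smul, hscal]
      show algebraMap (Polynomial K) (RatFunc K) (P k) * h k a = _
      rw [hvec k]
      by_cases hb : a = k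
      · subst hb; rw [sv_same, if_pos rfl]
      · rw [sv_other hb, if_neg hb, mul_zero]
    rw [Finset.sum_congr rfl (fun k _ => e7 k), Finset.sum_ite_eq Finset.univ a
      (fun k => algebraMap (Polynomial K) (RatFunc K) (P k) * lam),
      if_pos (Finset.mem_univ a)] at e6
    rw [algX2] at e6
    rw [e6, ← hP a]
  -- compute lam
  obtain ⟨k0, hk0⟩ := he2
  set m0 : ↥S := ⟨sv k0 ((RatFunc.X : RatFunc K) ^ (dExp s t (k0 : ℕ))), hsvS k0 _ le_rfl⟩
    with hm0def
  obtain ⟨q, hq⟩ : ∃ q : Polynomial K, (g m0 : Fin n → RatFunc K) k0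
      = RatFunc.X ^ (dExp u v (k0 : ℕ)) * algebraMap (Polynomial K) (RatFunc K) q :=
    (hTmem _).mp (g m0).2 k0
  have hlam : lam = RatFunc.X ^ (2:ℤ) * (RatFunc.X ^ e * algebraMap (Polynomial K) (RatFunc K) q) := by
    have hsv0 : (m0 : Fin n → RatFunc K) k0 = (RatFunc.X : RatFunc K) ^ (dExp s t (k0:ℕ)) :=
      sv_same k0 _
    have hc := stepC m0 k0
    rw [hq, hsv0] at hc
    apply mul_left_cancel₀ (zpow_ne (dExp s t (k0:ℕ)))
    rw [← hc]
    have hee : dExp s t (k0:ℕ) + (2 + e) = 2 + dExp u v (k0:ℕ) := by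
      have := he1 k0; omega
    calc RatFunc.X ^ (2:ℤ) * ((RatFunc.X : RatFunc K) ^ (dExp u v (k0:ℕ)) * algebraMap (Polynomial K) (RatFunc K) q)
        = RatFunc.X ^ ((2:ℤ) + dExp u v (k0:ℕ)) * algebraMap (Polynomial K) (RatFunc K) q := by
          rw [← mul_assoc, ← zpow_add₀ X_ne]
      _ = RatFunc.X ^ (dExp s t (k0:ℕ) + (2 + e)) * algebraMap (Polynomial K) (RatFunc K) q := by
          rw [hee]
      _ = RatFunc.X ^ (dExp s t (k0:ℕ)) * (RatFunc.X ^ (2:ℤ) * (RatFunc.X ^ e * algebraMap (Polynomial K) (RatFunc K) q)) := by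
          rw [← mul_assoc, ← mul_assoc, ← zpow_add₀ X_ne, ← zpow_add₀ X_ne]
          congr 2
          omega
  -- the unique polynomial
  refine ⟨q, ?_, ?_⟩
  · intro m
    apply Subtype.ext
    rw [Submodule.coe_smul, hscal]
    funext a
    show (g m : Fin n → RatFunc K) a
      = algebraMap (Polynomial K) (RatFunc K) q * (RatFunc.X ^ e * (m : Fin n → RatFunc K) a)
    apply mul_left_cancel₀ (zpow_ne 2)
    rw [stepC m a, hlam]
    ring
  · intro p' hp'
    have h1 := congrArg (fun z : ↥T => (z : Fin n → RatFunc K) k0) (hp' m0)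
    have h2 : (g m0 : Fin n → RatFunc K) k0
        = algebraMap (Polynomial K) (RatFunc K) q
            * (RatFunc.X ^ e * RatFunc.X ^ (dExp s t (k0:ℕ))) := by
      have heq : e + dExp s t (k0:ℕ) = dExp u v (k0:ℕ) :=
        le_antisymm hk0 (by have := he1 k0; omega)
      rw [hq, show (RatFunc.X : RatFunc K) ^ e * RatFunc.X ^ (dExp s t (k0:ℕ))
        = RatFunc.X ^ (dExp u v (k0:ℕ)) from by rw [← zpow_add₀ X_ne, heq]]
      ring
    simp only [Submodule.coe_smul, hscal] at h1
    -- h1 : (g m0) k0 = algebraMap p' * (f₀ m0) k0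
    have h3 : (g m0 : Fin n → RatFunc K) k0
        = algebraMap (Polynomial K) (RatFunc K) p'
            * (RatFunc.X ^ e * RatFunc.X ^ (dExp s t (k0:ℕ))) := by
      rw [h1]
      show algebraMap (Polynomial K) (RatFunc K) p'
          * (RatFunc.X ^ e * sv k0 ((RatFunc.X : RatFunc K) ^ (dExp s t (k0:ℕ))) k0) = _
      rw [sv_same]
    have h4 := h3.symm.trans h2
    have h5 : algebraMap (Polynomial K) (RatFunc K) p' = algebraMap (Polynomial K) (RatFunc K) q :=
      mul_right_cancel₀ (mul_ne_zero (zpow_ne e) (zpow_ne _)) h4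
    exact RatFunc.algebraMap_injective K h5

end St7


/-- For any `1 ≤ s < t ≤ n` and `1 ≤ u < v ≤ n`, the `K[x]`-module `Hom_Λ((s,t),(u,v))` is
free of rank `1`: there is a homomorphism `f₀` such that every homomorphism `g` is uniquely of
the form `g = p • f₀` with `p ∈ K[x]` (where `p` acts through the central embedding
`p ↦ p·Id` of `K[x]` into `Λ`). In particular, the endomorphism ring `End_Λ((s,t))` is
isomorphic to `K[x]`. -/

theorem statement7 (K : Type) [Field K] (n : ℕ) (hn : 3 ≤ n)
    (Λ : Subalgebra (Polynomial K) (Matrix (Fin n) (Fin n) (RatFunc K)))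
    (hΛ : (Λ : Set (Matrix (Fin n) (Fin n) (RatFunc K))) = lambdaCarrier K n)
    (E : ℕ → ℕ → Submodule ↥Λ (Fin n → RatFunc K))
    (hE : ∀ i j : ℕ, 1 ≤ i → i < j → j ≤ n →
      (E i j : Set (Fin n → RatFunc K)) = ijSet K n i j) :
    (∀ s t u v : ℕ, 1 ≤ s → s < t → t ≤ n → 1 ≤ u → u < v → v ≤ n →
      ∃ f₀ : ↥(E s t) →ₗ[↥Λ] ↥(E u v),
        ∀ g : ↥(E s t) →ₗ[↥Λ] ↥(E u v), ∃! p : Polynomial K,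
          ∀ m : ↥(E s t), g m = algebraMap (Polynomial K) ↥Λ p • f₀ m) ∧
    (∀ s t : ℕ, 1 ≤ s → s < t → t ≤ n →
      Nonempty (Module.End ↥Λ ↥(E s t) ≃+* Polynomial K)) := by
  constructor
  · intro s t u v hs hst ht hu huv hv
    have hS := hE s t hs hst ht
    have hT := hE u v hu huv hv
    have hne : (Finset.univ : Finset (Fin n)).Nonempty := ⟨⟨0, by omega⟩, Finset.mem_univ _⟩
    set e : ℤ := Finset.univ.sup' hne (fun k : Fin n => dExp u v (k:ℕ) - dExp s t (k:ℕ))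
      with hedef
    have he1 : ∀ k : Fin n, dExp u v (k:ℕ) ≤ e + dExp s t (k:ℕ) := by
      intro k
      have := Finset.le_sup' (fun k : Fin n => dExp u v (k:ℕ) - dExp s t (k:ℕ))
        (Finset.mem_univ k)
      omega
    have he2 : ∃ k : Fin n, e + dExp s t (k:ℕ) ≤ dExp u v (k:ℕ) := by
      obtain ⟨k, _, hk⟩ := Finset.exists_mem_eq_sup' hne
        (fun k : Fin n => dExp u v (k:ℕ) - dExp s t (k:ℕ))
      refine ⟨k, ?_⟩
      rw [hedef, hk]
      omega
    obtain ⟨f₀, _, hmain⟩ := St7.master hn Λ hΛ (E s t) (E u v) s t u v hS hT e he1 he2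
    exact ⟨f₀, hmain⟩
  · intro s t hs hst ht
    have hS := hE s t hs hst ht
    obtain ⟨f₀, hf₀, hmain⟩ := St7.master hn Λ hΛ (E s t) (E s t) s t s t hS hS 0
      (fun k => by simp) ⟨⟨0, by omega⟩, by simp⟩
    have hid : ∀ m : ↥(E s t), f₀ m = m := by
      intro m
      apply Subtype.ext
      funext k
      rw [hf₀ m k]
      simp
    let ψ : Polynomial K →+* Module.End ↥Λ ↥(E s t) :=
      { toFun := fun p =>
          { toFun := fun m => algebraMap (Polynomial K) ↥Λ p • m
            map_add' := fun m m' => smul_add _ m m'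
            map_smul' := fun A m => by
              simp only [RingHom.id_apply]
              rw [← mul_smul, ← mul_smul, Algebra.commutes] }
        map_one' := by
          apply LinearMap.ext
          intro m
          show algebraMap (Polynomial K) ↥Λ 1 • m = m
          rw [_root_.map_one, one_smul]
        map_mul' := fun p q => by
          apply LinearMap.ext
          intro m
          show algebraMap (Polynomial K) ↥Λ (p * q) • m
            = algebraMap (Polynomial K) ↥Λ p • (algebraMap (Polynomial K) ↥Λ q • m)
          rw [_root_.map_mul, mul_smul]
        map_zero' := by
          apply LinearMap.ext
          intro m
          show algebraMap (Polynomial K) ↥Λ 0 • m = 0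
          rw [_root_.map_zero, zero_smul]
        map_add' := fun p q => by
          apply LinearMap.ext
          intro m
          show algebraMap (Polynomial K) ↥Λ (p + q) • m
            = algebraMap (Polynomial K) ↥Λ p • m + algebraMap (Polynomial K) ↥Λ q • m
          rw [_root_.map_add, add_smul] }
    have hψ : ∀ (p : Polynomial K) (m : ↥(E s t)),
        ψ p m = algebraMap (Polynomial K) ↥Λ p • m := fun _ _ => rfl
    have hbij : Function.Bijective ψ := by
      constructor
      · intro p p' hpp'
        have h1 : ∀ m : ↥(E s t), ψ p m = algebraMap (Polynomial K) ↥Λ p • f₀ m := by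
          intro m; rw [hid m]; exact hψ p m
        have h2 : ∀ m : ↥(E s t), ψ p m = algebraMap (Polynomial K) ↥Λ p' • f₀ m := by
          intro m; rw [hid m, hpp']; exact hψ p' m
        obtain ⟨pp, _, huniq⟩ := hmain (ψ p)
        exact (huniq p h1).trans (huniq p' h2).symm
      · intro g
        obtain ⟨p, hp, _⟩ := hmain g
        refine ⟨p, ?_⟩
        apply LinearMap.ext
        intro m
        rw [hψ p m, hp m, hid m]
    exact ⟨(RingEquiv.ofBijective ψ hbij).symm⟩
end
end

section
/- The K[x]-dual Hom_{K[x]}(Λ, K[x]), regarded as a left Λ-module via (λ·f)(µ) := f(µ·λ), is a free left Λ-module of rank 1, i.e., it is isomorphic to Λ as a left Λ-module. In particular, Hom_{K[x]}(Λ, K[x]) is a projective left Λ-module, so Λ is a Gorenstein order. -/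
set_option synthInstance.maxHeartbeats 1000000
set_option maxHeartbeats 1000000

open Polynomial Matrix

noncomputable section

section Dual

variable {K : Type} [Field K] {n : ℕ}
variable (Λ : Subalgebra (Polynomial K) (Matrix (Fin n) (Fin n) (RatFunc K)))

/-- The action `(λ·f)(u) := f(u·λ)` of `Λ` on the `K[x]`-dual of `Λ`. -/
def dualSmul (a : ↥Λ) (f : ↥Λ →ₗ[Polynomial K] Polynomial K) :
    ↥Λ →ₗ[Polynomial K] Polynomial K where
  toFun u := f (u * a)
  map_add' u w := by (try simp only []); rw [add_mul, map_add]
  map_smul' p u := by (try simp only []); rw [RingHom.id_apply, smul_mul_assoc, _root_.map_smul]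

/-- The `K[x]`-dual `Hom_{K[x]}(Λ, K[x])` is a left `Λ`-module via `(λ·f)(u) := f(u·λ)`. -/
instance dualModule : Module ↥Λ (↥Λ →ₗ[Polynomial K] Polynomial K) where
  smul := dualSmul Λ
  one_smul f := LinearMap.ext fun u => by
    show f (u * 1) = f u
    rw [mul_one]
  mul_smul a b f := LinearMap.ext fun u => by
    show f (u * (a * b)) = f (u * a * b)
    rw [mul_assoc]
  smul_zero a := LinearMap.ext fun _ => rfl
  smul_add a f g := LinearMap.ext fun _ => rfl
  add_smul a b f := LinearMap.ext fun u => by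
    show f (u * (a + b)) = f (u * a) + f (u * b)
    rw [mul_add, map_add]
  zero_smul f := LinearMap.ext fun u => by
    show f (u * 0) = 0
    rw [mul_zero, map_zero]

end Dual

section ProofAux

variable {K : Type} [Field K] {n : ℕ}

/-! ### Combinatorics of the exponents -/

lemma cExp_triangle (hn : 3 ≤ n) (i j l : Fin n) :
    cExp n i l ≤ cExp n i j + cExp n j l := by
  have hi := i.isLt; have hj := j.isLt; have hl := l.isLt
  simp only [cExp]
  split_ifs <;> omega

/-- The permutation `l ↦ l + 2 (mod n)`. -/
def sig (n : ℕ) (hn : 3 ≤ n) (l : Fin n) : Fin n :=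
  if h : (l : ℕ) + 2 < n then ⟨(l : ℕ) + 2, h⟩ else ⟨(l : ℕ) + 2 - n, by have := l.isLt; omega⟩

def sigInv (n : ℕ) (hn : 3 ≤ n) (l : Fin n) : Fin n :=
  if h : (l : ℕ) < 2 then ⟨(l : ℕ) + (n - 2), by have := l.isLt; omega⟩
  else ⟨(l : ℕ) - 2, by have := l.isLt; omega⟩

lemma sig_val (hn : 3 ≤ n) (l : Fin n) :
    ((sig n hn l : Fin n) : ℕ) = if (l : ℕ) + 2 < n then (l : ℕ) + 2 else (l : ℕ) + 2 - n := by
  unfold sig; split_ifs <;> rfl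

lemma sigInv_val (hn : 3 ≤ n) (l : Fin n) :
    ((sigInv n hn l : Fin n) : ℕ) = if (l : ℕ) < 2 then (l : ℕ) + (n - 2) else (l : ℕ) - 2 := by
  unfold sigInv; split_ifs <;> rfl

lemma sigInv_sig (hn : 3 ≤ n) (l : Fin n) : sigInv n hn (sig n hn l) = l := by
  have h1 := sig_val hn l
  have h2 := sigInv_val hn (sig n hn l)
  have h3 := l.isLt
  have h4 := (sig n hn l).isLt
  apply Fin.ext
  rw [h2, h1]
  split_ifs <;> omega

lemma sig_sigInv (hn : 3 ≤ n) (l : Fin n) : sig n hn (sigInv n hn l) = l := by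
  have h1 := sigInv_val hn l
  have h2 := sig_val hn (sigInv n hn l)
  have h3 := l.isLt
  have h4 := (sigInv n hn l).isLt
  apply Fin.ext
  rw [h2, h1]
  split_ifs <;> omega

lemma sig_sum (hn : 3 ≤ n) (i l : Fin n) :
    cExp n i l + cExp n (sig n hn l) i = if (l : ℕ) + 2 < n then 2 else 0 := by
  have hi := i.isLt; have hl := l.isLt
  have hs := sig_val hn l
  rcases lt_or_ge ((l : ℕ) + 2) n with h | h
  · rw [if_pos h] at hs; rw [if_pos h]
    simp only [cExp, hs]
    split_ifs <;> first | omega | simp_all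
  · rw [if_neg (by omega)] at hs; rw [if_neg (by omega)]
    simp only [cExp, hs]
    split_ifs <;> first | omega | simp_all

lemma sigma_cond (hn : 3 ≤ n) (i j l : Fin n) :
    cExp n i l + cExp n (sig n hn l) i = cExp n j l + cExp n (sig n hn l) j := by
  rw [sig_sum hn i l, sig_sum hn j l]

/-- Structure constants exponent. -/
def sCo (n : ℕ) (i j l : Fin n) : ℕ := (cExp n i j + cExp n j l - cExp n i l).toNat

lemma sCo_cast (hn : 3 ≤ n) (i j l : Fin n) :
    (sCo n i j l : ℤ) = cExp n i j + cExp n j l - cExp n i l :=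
  Int.toNat_of_nonneg (by have := cExp_triangle hn i j l; omega)

lemma sCo_eq (hn : 3 ≤ n) (i j l : Fin n) : sCo n i j l = sCo n (sig n hn l) i j := by
  have h1 := sCo_cast hn i j l
  have h2 := sCo_cast hn (sig n hn l) i j
  have h3 := sigma_cond hn i j l
  have h4 := sigma_cond hn j i l
  omega

/-- The index bijection `(k, l) ↦ (σ l, k)`. -/
def tauE (n : ℕ) (hn : 3 ≤ n) : (Fin n × Fin n) ≃ (Fin n × Fin n) where
  toFun q := (sig n hn q.2, q.1)
  invFun q := (q.2, sigInv n hn q.1)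
  left_inv q := by simp [sigInv_sig hn]
  right_inv q := by simp [sig_sigInv hn]

/-! ### The standard basis of `Λ` -/

/-- Powers of `X` in `RatFunc K`. -/
def rX (K : Type) [Field K] (c : ℤ) : RatFunc K := (RatFunc.X : RatFunc K) ^ c

lemma rX_ne_zero (c : ℤ) : rX K c ≠ 0 := zpow_ne_zero _ RatFunc.X_ne_zero

/-- The basis matrices `x^{c_{ij}} E_{ij}`. -/
def bM (K : Type) [Field K] (n : ℕ) (q : Fin n × Fin n) :
    Matrix (Fin n) (Fin n) (RatFunc K) :=
  Matrix.single q.1 q.2 (rX K (cExp n q.1 q.2))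

lemma bM_apply (q : Fin n × Fin n) (i j : Fin n) :
    bM K n q i j = if q.1 = i ∧ q.2 = j then rX K (cExp n q.1 q.2) else 0 := by
  by_cases h : q.1 = i ∧ q.2 = j
  · obtain ⟨h1, h2⟩ := h; subst h1; subst h2
    rw [if_pos ⟨rfl, rfl⟩]
    exact Matrix.single_apply_same _ _ _
  · rw [if_neg h]
    exact Matrix.single_apply_of_ne _ _ _ _ _ h

lemma bM_mem (Λ : Subalgebra (Polynomial K) (Matrix (Fin n) (Fin n) (RatFunc K)))
    (hΛ : (Λ : Set (Matrix (Fin n) (Fin n) (RatFunc K))) = lambdaCarrier K n)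
    (q : Fin n × Fin n) : bM K n q ∈ Λ := by
  rw [← SetLike.mem_coe, hΛ]
  intro i j
  rw [bM_apply]
  split_ifs with h
  · obtain ⟨h1, h2⟩ := h; subst h1; subst h2
    exact ⟨1, by rw [_root_.map_one, mul_one]; rfl⟩
  · exact ⟨0, by rw [map_zero, mul_zero]⟩

variable (Λ : Subalgebra (Polynomial K) (Matrix (Fin n) (Fin n) (RatFunc K)))

/-- The basis elements of `Λ`. -/
def bE (hΛ : (Λ : Set (Matrix (Fin n) (Fin n) (RatFunc K))) = lambdaCarrier K n)
    (q : Fin n × Fin n) : ↥Λ :=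
  ⟨bM K n q, bM_mem Λ hΛ q⟩

lemma bE_li (hΛ : (Λ : Set (Matrix (Fin n) (Fin n) (RatFunc K))) = lambdaCarrier K n) :
    LinearIndependent (Polynomial K) (bE Λ hΛ) := by
  rw [Fintype.linearIndependent_iff]
  intro g hg q
  have h : ∑ p : Fin n × Fin n, g p • bM K n p = 0 := by
    have h := congrArg (Subalgebra.val Λ).toLinearMap hg
    rw [map_sum, map_zero] at h
    simpa [bE] using h
  have h2 := congrFun (congrFun h q.1) q.2
  rw [Matrix.sum_apply] at h2
  simp only [Matrix.smul_apply, bM_apply, Matrix.zero_apply] at h2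
  rw [Finset.sum_eq_single q] at h2
  · rw [if_pos ⟨rfl, rfl⟩, Algebra.smul_def] at h2
    rcases mul_eq_zero.mp h2 with h3 | h3
    · exact RatFunc.algebraMap_injective K (by rw [h3, map_zero])
    · exact absurd h3 (rX_ne_zero _)
  · intro p _ hpq
    rw [if_neg (by rintro ⟨h1, h2⟩; exact hpq (Prod.ext h1 h2)), smul_zero]
  · exact fun hq => absurd (Finset.mem_univ q) hq

lemma bE_span (hΛ : (Λ : Set (Matrix (Fin n) (Fin n) (RatFunc K))) = lambdaCarrier K n) :
    ⊤ ≤ Submodule.span (Polynomial K) (Set.range (bE Λ hΛ)) := by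
  rintro ⟨M, hM⟩ -
  have hmem : ∀ i j, M i j ∈ xPow K (cExp n i j) := by
    have : M ∈ lambdaCarrier K n := by rw [← hΛ]; exact hM
    exact this
  choose p hp using hmem
  have hMeq : (⟨M, hM⟩ : ↥Λ) = ∑ q : Fin n × Fin n, p q.1 q.2 • bE Λ hΛ q := by
    apply Subtype.ext
    have hco : ((∑ q : Fin n × Fin n, p q.1 q.2 • bE Λ hΛ q : ↥Λ) :
        Matrix (Fin n) (Fin n) (RatFunc K)) = ∑ q : Fin n × Fin n, p q.1 q.2 • bM K n q := by
      have h := map_sum (Subalgebra.val Λ).toLinearMap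
        (fun q : Fin n × Fin n => p q.1 q.2 • bE Λ hΛ q) Finset.univ
      exact h.trans (by simp only [_root_.map_smul]; rfl)
    rw [hco]
    ext i j
    rw [Matrix.sum_apply]
    simp only [Matrix.smul_apply, bM_apply]
    rw [Finset.sum_eq_single ((i, j) : Fin n × Fin n)]
    · rw [if_pos ⟨rfl, rfl⟩, Algebra.smul_def, hp i j, mul_comm]
      rfl
    · intro q _ hq
      rw [if_neg (by rintro ⟨h1, h2⟩; exact hq (Prod.ext h1 h2)), smul_zero]
    · exact fun hq => absurd (Finset.mem_univ _) hq
  rw [hMeq]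
  exact Submodule.sum_mem _ fun q _ =>
    Submodule.smul_mem _ _ (Submodule.subset_span ⟨q, rfl⟩)

/-- The basis of `Λ`. -/
def bB (hΛ : (Λ : Set (Matrix (Fin n) (Fin n) (RatFunc K))) = lambdaCarrier K n) :
    Module.Basis (Fin n × Fin n) (Polynomial K) ↥Λ :=
  Module.Basis.mk (bE_li Λ hΛ) (bE_span Λ hΛ)

lemma bB_apply (hΛ : (Λ : Set (Matrix (Fin n) (Fin n) (RatFunc K))) = lambdaCarrier K n)
    (q : Fin n × Fin n) : bB Λ hΛ q = bE Λ hΛ q := by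
  rw [bB, Module.Basis.coe_mk]

/-! ### Multiplication rules -/

lemma bE_mul_same (hn : 3 ≤ n)
    (hΛ : (Λ : Set (Matrix (Fin n) (Fin n) (RatFunc K))) = lambdaCarrier K n)
    (i j l : Fin n) :
    bE Λ hΛ (i, j) * bE Λ hΛ (j, l)
      = (Polynomial.X ^ sCo n i j l : Polynomial K) • bE Λ hΛ (i, l) := by
  apply Subtype.ext
  show Matrix.single i j (rX K (cExp n i j)) * Matrix.single j l (rX K (cExp n j l))
      = (Polynomial.X ^ sCo n i j l : Polynomial K) • Matrix.single i l (rX K (cExp n i l))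
  rw [Matrix.single_mul_single_same, Matrix.smul_single]
  have hexp : rX K (cExp n i j) * rX K (cExp n j l)
      = (Polynomial.X ^ sCo n i j l : Polynomial K) • rX K (cExp n i l) := by
    rw [Algebra.smul_def, map_pow, RatFunc.algebraMap_X]
    unfold rX
    rw [← zpow_natCast (RatFunc.X : RatFunc K) (sCo n i j l), ← zpow_add₀ RatFunc.X_ne_zero,
      ← zpow_add₀ RatFunc.X_ne_zero]
    have := sCo_cast hn i j l
    congr 1
    omega
  rw [hexp]

lemma bE_mul_ne (hΛ : (Λ : Set (Matrix (Fin n) (Fin n) (RatFunc K))) = lambdaCarrier K n)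
    {i j k l : Fin n} (h : j ≠ k) : bE Λ hΛ (i, j) * bE Λ hΛ (k, l) = 0 := by
  apply Subtype.ext
  show bM K n (i, j) * bM K n (k, l) = 0
  unfold bM
  exact Matrix.single_mul_single_of_ne _ _ _ _ h _

/-! ### The isomorphism -/

/-- The `K[x]`-linear isomorphism between `Λ` and its dual. -/
def eIso (hn : 3 ≤ n)
    (hΛ : (Λ : Set (Matrix (Fin n) (Fin n) (RatFunc K))) = lambdaCarrier K n) :
    ↥Λ ≃ₗ[Polynomial K] Module.Dual (Polynomial K) ↥Λ :=
  (bB Λ hΛ).equiv (bB Λ hΛ).dualBasis (tauE n hn)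

lemma eIso_apply (hn : 3 ≤ n)
    (hΛ : (Λ : Set (Matrix (Fin n) (Fin n) (RatFunc K))) = lambdaCarrier K n)
    (q : Fin n × Fin n) :
    eIso Λ hn hΛ (bE Λ hΛ q) = (bB Λ hΛ).dualBasis (tauE n hn q) := by
  rw [← bB_apply]
  exact Module.Basis.equiv_apply (bB Λ hΛ) q ((bB Λ hΛ).dualBasis) (tauE n hn)

lemma D_apply (hΛ : (Λ : Set (Matrix (Fin n) (Fin n) (RatFunc K))) = lambdaCarrier K n)
    (a b : Fin n × Fin n) :
    (bB Λ hΛ).dualBasis a (bE Λ hΛ b) = if b = a then 1 else 0 := by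
  rw [← bB_apply]
  exact Module.Basis.dualBasis_apply_self _ _ _

lemma tauE_apply (hn : 3 ≤ n) (q : Fin n × Fin n) : tauE n hn q = (sig n hn q.2, q.1) := rfl

lemma tri (hn : 3 ≤ n)
    (hΛ : (Λ : Set (Matrix (Fin n) (Fin n) (RatFunc K))) = lambdaCarrier K n)
    (p q r : Fin n × Fin n) :
    eIso Λ hn hΛ (bE Λ hΛ p * bE Λ hΛ q) (bE Λ hΛ r)
      = eIso Λ hn hΛ (bE Λ hΛ q) (bE Λ hΛ r * bE Λ hΛ p) := by
  obtain ⟨i, j⟩ := p; obtain ⟨k, l⟩ := q; obtain ⟨u, v⟩ := r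
  by_cases h1 : j = k
  · subst h1
    by_cases h2 : v = i
    · subst h2
      rw [bE_mul_same Λ hn hΛ v j l, bE_mul_same Λ hn hΛ u v j,
        _root_.map_smul, LinearMap.smul_apply, _root_.map_smul]
      simp only [eIso_apply, D_apply, tauE_apply]
      by_cases h3 : u = sig n hn l
      · subst h3
        rw [if_pos rfl, if_pos rfl, sCo_eq hn v j l]
      · rw [if_neg (show ¬ (u, v) = (sig n hn l, v) by intro hh; exact h3 (congrArg Prod.fst hh)),
          if_neg (show ¬ (u, j) = (sig n hn l, j) by intro hh; exact h3 (congrArg Prod.fst hh)), smul_zero, smul_zero]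
    · rw [bE_mul_same Λ hn hΛ i j l, bE_mul_ne Λ hΛ (by exact h2), map_zero,
        _root_.map_smul, LinearMap.smul_apply]
      simp only [eIso_apply, D_apply, tauE_apply]
      rw [if_neg (show ¬ (u, v) = (sig n hn l, i) by intro hh; exact h2 (congrArg Prod.snd hh)), smul_zero]
  · rw [bE_mul_ne Λ hΛ h1, map_zero, LinearMap.zero_apply]
    by_cases h2 : v = i
    · subst h2
      rw [bE_mul_same Λ hn hΛ u v j, _root_.map_smul]
      simp only [eIso_apply, D_apply, tauE_apply]
      rw [if_neg (show ¬ (u, j) = (sig n hn l, k) by intro hh; exact h1 (congrArg Prod.snd hh)), smul_zero]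
    · rw [bE_mul_ne Λ hΛ (by exact h2), map_zero]

lemma key2 (hn : 3 ≤ n)
    (hΛ : (Λ : Set (Matrix (Fin n) (Fin n) (RatFunc K))) = lambdaCarrier K n)
    (a : ↥Λ) (q r : Fin n × Fin n) :
    eIso Λ hn hΛ (a * bE Λ hΛ q) (bE Λ hΛ r)
      = eIso Λ hn hΛ (bE Λ hΛ q) (bE Λ hΛ r * a) := by
  have hmem : a ∈ Submodule.span (Polynomial K) (Set.range (bE Λ hΛ)) :=
    bE_span Λ hΛ Submodule.mem_top
  induction hmem using Submodule.span_induction with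
  | mem x h =>
    obtain ⟨p, rfl⟩ := h
    exact tri Λ hn hΛ p q r
  | zero => rw [zero_mul, map_zero, LinearMap.zero_apply, mul_zero, map_zero]
  | add x y hx hy ihx ihy =>
    rw [add_mul, map_add, LinearMap.add_apply, ihx, ihy, mul_add, map_add]
  | smul c x hx ih =>
    rw [smul_mul_assoc, _root_.map_smul, LinearMap.smul_apply, ih, mul_smul_comm,
      _root_.map_smul]

lemma key1 (hn : 3 ≤ n)
    (hΛ : (Λ : Set (Matrix (Fin n) (Fin n) (RatFunc K))) = lambdaCarrier K n)
    (a : ↥Λ) (q : Fin n × Fin n) (μ : ↥Λ) :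
    eIso Λ hn hΛ (a * bE Λ hΛ q) μ = eIso Λ hn hΛ (bE Λ hΛ q) (μ * a) := by
  have hmem : μ ∈ Submodule.span (Polynomial K) (Set.range (bE Λ hΛ)) :=
    bE_span Λ hΛ Submodule.mem_top
  induction hmem using Submodule.span_induction with
  | mem x h =>
    obtain ⟨r, rfl⟩ := h
    exact key2 Λ hn hΛ a q r
  | zero => rw [map_zero, zero_mul, map_zero]
  | add x y hx hy ihx ihy => rw [map_add, ihx, ihy, add_mul, map_add]
  | smul c x hx ih => rw [_root_.map_smul, ih, smul_mul_assoc, _root_.map_smul]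

lemma dualSmul_apply (a : ↥Λ) (f : ↥Λ →ₗ[Polynomial K] Polynomial K) (μ : ↥Λ) :
    dualSmul Λ a f μ = f (μ * a) := rfl

lemma key (hn : 3 ≤ n)
    (hΛ : (Λ : Set (Matrix (Fin n) (Fin n) (RatFunc K))) = lambdaCarrier K n)
    (a x : ↥Λ) :
    eIso Λ hn hΛ (a * x) = dualSmul Λ a (eIso Λ hn hΛ x) := by
  have hmem : x ∈ Submodule.span (Polynomial K) (Set.range (bE Λ hΛ)) :=
    bE_span Λ hΛ Submodule.mem_top
  induction hmem using Submodule.span_induction with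
  | mem y h =>
    obtain ⟨q, rfl⟩ := h
    exact LinearMap.ext fun μ => key1 Λ hn hΛ a q μ
  | zero =>
    rw [mul_zero, map_zero]
    exact LinearMap.ext fun μ => rfl
  | add x y hx hy ihx ihy =>
    rw [mul_add, map_add, map_add, ihx, ihy]
    exact LinearMap.ext fun μ => rfl
  | smul c x hx ih =>
    rw [mul_smul_comm, _root_.map_smul, _root_.map_smul, ih]
    exact LinearMap.ext fun μ => rfl

/-- The isomorphism of left `Λ`-modules. -/
def bigIso (hn : 3 ≤ n)
    (hΛ : (Λ : Set (Matrix (Fin n) (Fin n) (RatFunc K))) = lambdaCarrier K n) :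
    ↥Λ ≃ₗ[↥Λ] (↥Λ →ₗ[Polynomial K] Polynomial K) where
  toFun := eIso Λ hn hΛ
  map_add' := map_add _
  map_smul' a x := key Λ hn hΛ a x
  invFun := (eIso Λ hn hΛ).symm
  left_inv := (eIso Λ hn hΛ).left_inv
  right_inv := (eIso Λ hn hΛ).right_inv

end ProofAux

/-- The `K[x]`-dual `Hom_{K[x]}(Λ, K[x])`, regarded as a left `Λ`-module via
`(λ·f)(u) := f(u·λ)`, is a free left `Λ`-module of rank `1`, i.e. isomorphic to `Λ` as a left
`Λ`-module; in particular it is a projective left `Λ`-module, so `Λ` is a Gorenstein order. -/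
theorem statement11 (K : Type) [Field K] (n : ℕ) (hn : 3 ≤ n)
    (Λ : Subalgebra (Polynomial K) (Matrix (Fin n) (Fin n) (RatFunc K)))
    (hΛ : (Λ : Set (Matrix (Fin n) (Fin n) (RatFunc K))) = lambdaCarrier K n) :
    Nonempty (↥Λ ≃ₗ[↥Λ] (↥Λ →ₗ[Polynomial K] Polynomial K)) ∧
    Module.Projective ↥Λ (↥Λ →ₗ[Polynomial K] Polynomial K) := by
  exact ⟨⟨bigIso Λ hn hΛ⟩, Module.Projective.of_equiv (bigIso Λ hn hΛ)⟩
end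
end

section
/- Let n ≥ 3, T = K[X,Y] the polynomial ring in two variables, S = T/(X^{n−2} − Y²), and π : T → S the quotient map. For 0 ≤ i ≤ n−1, let S_ī be the K-linear span in S of {π(X^c·Y^d) : c, d ≥ 0, c − d ≡ i (mod n)}. Then S_ī = {π(q(X·Y)·X^i) : q ∈ K[t]} for each 0 ≤ i ≤ n−2, and S_{n−1} = {π(q(X·Y)·Y) : q ∈ K[t]}. In particular, each S_ī is a free module of rank 1 over the subring π(K[X·Y]) of S. -/
set_option synthInstance.maxHeartbeats 1000000
set_option maxHeartbeats 1000000

open MvPolynomial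

noncomputable section

/-- The quotient ring `S = K[X,Y]/(X^{n-2} - Y²)`, with `X = X 0` and `Y = X 1`. -/
abbrev SRing (K : Type) [Field K] (n : ℕ) : Type :=
  MvPolynomial (Fin 2) K ⧸
    (Ideal.span {(X 0 : MvPolynomial (Fin 2) K) ^ (n - 2) - X 1 ^ 2})

/-- The quotient map `π : K[X,Y] → S`. -/
abbrev sMk (K : Type) [Field K] (n : ℕ) : MvPolynomial (Fin 2) K →+* SRing K n :=
  Ideal.Quotient.mk _

/-- The degree-`ī` component `S_ī` of `S` for the `ℤ/nℤ`-grading with `deg X = 1` and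
`deg Y = −1`: the `K`-linear span of the images of the monomials `X^c·Y^d` with
`c − d ≡ i (mod n)`. -/
def Sdeg (K : Type) [Field K] (n : ℕ) (i : ZMod n) : Submodule K (SRing K n) :=
  Submodule.span K
    {s | ∃ c d : ℕ, (c : ZMod n) - (d : ZMod n) = i ∧
      s = sMk K n ((X 0 : MvPolynomial (Fin 2) K) ^ c * X 1 ^ d)}

namespace Stmt13Aux

variable {K : Type} [Field K] {n : ℕ}

lemma y_sq (hn : 3 ≤ n) :
    (sMk K n (X 1)) ^ 2 = (sMk K n (X 0)) ^ (n - 2) := by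
  rw [← map_pow, ← map_pow]
  exact Ideal.Quotient.eq.mpr (Ideal.mem_span_singleton.mpr ⟨-1, by ring⟩)

lemma u_sq (hn : 3 ≤ n) :
    (sMk K n (X 0 * X 1)) ^ 2 = (sMk K n (X 0)) ^ n := by
  have h2 : 2 + (n - 2) = n := by omega
  rw [map_mul, mul_pow, y_sq hn, ← pow_add, h2]

lemma u_pow (hn : 3 ≤ n) (m : ℕ) :
    (sMk K n (X 0 * X 1)) ^ (2 * m) = (sMk K n (X 0)) ^ (n * m) := by
  rw [pow_mul, u_sq hn, ← pow_mul]

lemma u_pow2 (hn : 3 ≤ n) (m : ℕ) :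
    (sMk K n (X 0) * sMk K n (X 1)) ^ (2 * m) = (sMk K n (X 0)) ^ (n * m) := by
  rw [← map_mul]; exact u_pow hn m

lemma reduce (hn : 3 ≤ n) (c d : ℕ) :
    ∃ a : ℕ, ((a : ZMod n) = (c : ZMod n) - (d : ZMod n) + ((d % 2 : ℕ) : ZMod n)) ∧
      sMk K n (X 0 ^ c * X 1 ^ d) = sMk K n (X 0 ^ a * X 1 ^ (d % 2)) := by
  refine ⟨c + (n - 2) * (d / 2), ?_, ?_⟩
  · have hd := congrArg (Nat.cast : ℕ → ZMod n) (Nat.div_add_mod d 2)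
    push_cast at hd
    push_cast [Nat.cast_sub (show 2 ≤ n by omega)]
    rw [ZMod.natCast_self]
    linear_combination -hd
  · simp only [map_mul, map_pow]
    rw [show (sMk K n (X 1)) ^ d = ((sMk K n (X 1)) ^ 2) ^ (d / 2) * (sMk K n (X 1)) ^ (d % 2) by
      rw [← pow_mul, ← pow_add]; congr 1; omega]
    rw [y_sq hn, ← pow_mul, ← mul_assoc, ← pow_add]

lemma exists_rep {a j : ℕ} (hj : j < n) (h : (a : ZMod n) = (j : ZMod n)) :
    ∃ m : ℕ, a = j + n * m := by
  have h2 : a % n = j % n := (ZMod.natCast_eq_natCast_iff a j n).mp h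
  refine ⟨a / n, ?_⟩
  conv_lhs => rw [← Nat.div_add_mod a n]
  rw [h2, Nat.mod_eq_of_lt hj, Nat.add_comm]

lemma mono_case_x (hn : 3 ≤ n) (i c d : ℕ) (hi : i ≤ n - 2)
    (h : (c : ZMod n) - (d : ZMod n) = (i : ZMod n)) :
    ∃ k : ℕ, sMk K n (X 0 ^ c * X 1 ^ d) = sMk K n ((X 0 * X 1) ^ k * X 0 ^ i) := by
  obtain ⟨a, ha, heq⟩ := reduce (K := K) hn c d
  rcases Nat.mod_two_eq_zero_or_one d with h0 | h0 <;> rw [h0] at ha heq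
  · have ha' : (a : ZMod n) = (i : ZMod n) := by rw [ha, h]; push_cast; ring
    obtain ⟨m, rfl⟩ := exists_rep (show i < n by omega) ha'
    refine ⟨2 * m, ?_⟩
    rw [heq]
    simp only [pow_zero, mul_one, map_mul, map_pow]
    have hu := u_pow2 hn (K := K) (n := n) m
    linear_combination (-(sMk K n (X 0)) ^ i) * hu
  · have ha' : (a : ZMod n) = ((i + 1 : ℕ) : ZMod n) := by rw [ha, h]; push_cast; ring
    obtain ⟨m, rfl⟩ := exists_rep (show i + 1 < n by omega) ha'
    refine ⟨2 * m + 1, ?_⟩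
    rw [heq]
    simp only [pow_one, map_mul, map_pow]
    have hu := u_pow2 hn (K := K) (n := n) m
    linear_combination (-(sMk K n (X 0)) ^ i * sMk K n (X 0) * sMk K n (X 1)) * hu

lemma mono_case_y (hn : 3 ≤ n) (c d : ℕ)
    (h : (c : ZMod n) - (d : ZMod n) = ((n - 1 : ℕ) : ZMod n)) :
    ∃ k : ℕ, sMk K n (X 0 ^ c * X 1 ^ d) = sMk K n ((X 0 * X 1) ^ k * X 1) := by
  obtain ⟨a, ha, heq⟩ := reduce (K := K) hn c d
  rcases Nat.mod_two_eq_zero_or_one d with h0 | h0 <;> rw [h0] at ha heq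
  · have ha' : (a : ZMod n) = ((n - 1 : ℕ) : ZMod n) := by rw [ha, h]; push_cast; ring
    obtain ⟨m, rfl⟩ := exists_rep (show n - 1 < n by omega) ha'
    refine ⟨2 * m + 1, ?_⟩
    rw [heq]
    simp only [pow_zero, mul_one, map_mul, map_pow]
    have hu := u_pow2 hn (K := K) (n := n) m
    have hy := y_sq hn (K := K) (n := n)
    obtain ⟨p, rfl⟩ : ∃ p, n = p + 3 := ⟨n - 3, by omega⟩
    simp only [show p + 3 - 1 = p + 2 from rfl, show p + 3 - 2 = p + 1 from rfl] at *
    linear_combination (-(sMk K (p+3) (X 0)) * (sMk K (p+3) (X 1)) ^ 2) * hu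
      - (sMk K (p+3) (X 0)) ^ ((p+3) * m + 1) * hy
  · have ha' : (a : ZMod n) = ((0 : ℕ) : ZMod n) := by
      rw [ha, h, Nat.cast_sub (show 1 ≤ n by omega)]
      push_cast
      rw [ZMod.natCast_self]
      ring
    obtain ⟨m, rfl⟩ := exists_rep (show 0 < n by omega) ha'
    refine ⟨2 * m, ?_⟩
    rw [heq]
    simp only [pow_one, map_mul, map_pow, Nat.zero_add]
    have hu := u_pow2 hn (K := K) (n := n) m
    linear_combination (-sMk K n (X 1)) * hu

/-- The `K`-linear map `q ↦ π(q(X·Y)·r)`. -/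
def Lmap (K : Type) [Field K] (n : ℕ) (r : MvPolynomial (Fin 2) K) :
    Polynomial K →ₗ[K] SRing K n :=
  (Ideal.Quotient.mkₐ K
      (Ideal.span {(X 0 : MvPolynomial (Fin 2) K) ^ (n - 2) - X 1 ^ 2})).toLinearMap
    ∘ₗ (LinearMap.mulRight K r)
    ∘ₗ (Polynomial.aeval ((X 0 : MvPolynomial (Fin 2) K) * X 1)).toLinearMap

lemma Lmap_apply (r : MvPolynomial (Fin 2) K) (q : Polynomial K) :
    Lmap K n r q = sMk K n (Polynomial.aeval ((X 0 : MvPolynomial (Fin 2) K) * X 1) q * r) :=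
  rfl

lemma sMk_smul (a : K) (p : MvPolynomial (Fin 2) K) :
    sMk K n (a • p) = a • sMk K n p :=
  map_smul (Ideal.Quotient.mkₐ K _) a p

lemma gen_mem_x (i k : ℕ) :
    sMk K n ((X 0 * X 1) ^ k * X 0 ^ i) ∈ Sdeg K n (i : ZMod n) := by
  apply Submodule.subset_span
  exact ⟨k + i, k, by push_cast; ring, congrArg (sMk K n) (by ring)⟩

lemma gen_mem_y (hn : 3 ≤ n) (k : ℕ) :
    sMk K n ((X 0 * X 1) ^ k * X 1) ∈ Sdeg K n ((n - 1 : ℕ) : ZMod n) := by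
  apply Submodule.subset_span
  refine ⟨k, k + 1, ?_, congrArg (sMk K n) (by ring)⟩
  rw [Nat.cast_sub (show 1 ≤ n by omega), ZMod.natCast_self]
  push_cast
  ring

lemma range_le (r : MvPolynomial (Fin 2) K) (i : ZMod n)
    (hr : ∀ k : ℕ, sMk K n ((X 0 * X 1) ^ k * r) ∈ Sdeg K n i) :
    LinearMap.range (Lmap K n r) ≤ Sdeg K n i := by
  rintro s ⟨q, rfl⟩
  induction q using Polynomial.induction_on' with
  | add p q hp hq => rw [map_add]; exact Submodule.add_mem _ hp hq
  | monomial m a =>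
    rw [Lmap_apply]
    have h1 : (Polynomial.aeval ((X 0 : MvPolynomial (Fin 2) K) * X 1))
        ((Polynomial.monomial m) a) = a • ((X 0 : MvPolynomial (Fin 2) K) * X 1) ^ m := by
      rw [← Polynomial.smul_X_eq_monomial, map_smul, map_pow, Polynomial.aeval_X]
    rw [h1, smul_mul_assoc, sMk_smul]
    exact Submodule.smul_mem _ a (hr m)

lemma sdeg_eq_x (hn : 3 ≤ n) (i : ℕ) (hi : i ≤ n - 2) :
    Sdeg K n (i : ZMod n) = LinearMap.range (Lmap K n (X 0 ^ i)) := by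
  apply le_antisymm
  · rw [Sdeg, Submodule.span_le]
    rintro s ⟨c, d, hcd, rfl⟩
    obtain ⟨k, hk⟩ := mono_case_x (K := K) hn i c d hi hcd
    refine ⟨Polynomial.X ^ k, ?_⟩
    rw [Lmap_apply, map_pow, Polynomial.aeval_X, hk]
  · exact range_le _ _ (fun k => gen_mem_x i k)

lemma sdeg_eq_y (hn : 3 ≤ n) :
    Sdeg K n ((n - 1 : ℕ) : ZMod n) = LinearMap.range (Lmap K n (X 1)) := by
  apply le_antisymm
  · rw [Sdeg, Submodule.span_le]
    rintro s ⟨c, d, hcd, rfl⟩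
    obtain ⟨k, hk⟩ := mono_case_y (K := K) hn c d hcd
    refine ⟨Polynomial.X ^ k, ?_⟩
    rw [Lmap_apply, map_pow, Polynomial.aeval_X, hk]
  · exact range_le _ _ (fun k => gen_mem_y hn k)

end Stmt13Aux

open Stmt13Aux in
/-- For `0 ≤ i ≤ n−2` one has `S_ī = {π(q(X·Y)·X^i) : q ∈ K[t]}`, and
`S_{n−1} = {π(q(X·Y)·Y) : q ∈ K[t]}`.  In particular each `S_ī` is free of rank one over the
subring `π(K[X·Y])` of `S`. -/
theorem statement13 (K : Type) [Field K] (n : ℕ) (hn : 3 ≤ n) :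
    (∀ i : ℕ, i ≤ n - 2 →
      (Sdeg K n (i : ZMod n) : Set (SRing K n)) =
        Set.range (fun q : Polynomial K =>
          sMk K n (Polynomial.aeval ((X 0 : MvPolynomial (Fin 2) K) * X 1) q * X 0 ^ i))) ∧
    ((Sdeg K n ((n - 1 : ℕ) : ZMod n) : Set (SRing K n)) =
      Set.range (fun q : Polynomial K =>
        sMk K n (Polynomial.aeval ((X 0 : MvPolynomial (Fin 2) K) * X 1) q * X 1))) := by
  constructor
  · intro i hi
    rw [sdeg_eq_x hn i hi]
    ext s
    simp only [SetLike.mem_coe, LinearMap.mem_range, Set.mem_range, Lmap_apply]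
  · rw [sdeg_eq_y hn]
    ext s
    simp only [SetLike.mem_coe, LinearMap.mem_range, Set.mem_range, Lmap_apply]
end
end

section
/- Let n ≥ 3, S = K[X,Y]/(X^{n−2} − Y²) with the ℤ/nℤ-grading induced by deg(X) = 1, deg(Y) = −1, and let S^{[n]} ⊆ M_n(S) be the set of n×n matrices m over S such that m_{ab} ∈ S_{\overline{b−a}} for all 1 ≤ a, b ≤ n, where S_ī denotes the degree-ī component of S. Then S^{[n]} is a K-subalgebra of M_n(S), and there is a K-algebra isomorphism S^{[n]} → Λ sending π(X·Y)·Id to x·Id (i.e., an isomorphism of K[x]-algebras, where x acts on S^{[n]} by multiplication by the image of X·Y). -/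
set_option synthInstance.maxHeartbeats 1000000
set_option maxHeartbeats 1000000

open Polynomial Matrix MvPolynomial

noncomputable section

/-- The set `S^{[n]}` of `n × n` matrices `m` over `S` with `m a b ∈ S_{\overline{b−a}}`. -/
def snSet (K : Type) [Field K] (n : ℕ) : Set (Matrix (Fin n) (Fin n) (SRing K n)) :=
  {m | ∀ a b : Fin n, m a b ∈ Sdeg K n (((b : ℕ) : ZMod n) - ((a : ℕ) : ZMod n))}

namespace Stmt14

variable (K : Type) [Field K] (n : ℕ)

def Xv : SRing K n := sMk K n (X 0)
def Yv : SRing K n := sMk K n (X 1)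
def tv : SRing K n := sMk K n (X 0 * X 1)

lemma tv_def : tv K n = Xv K n * Yv K n := map_mul _ _ _

lemma rel : (Xv K n) ^ (n - 2) = (Yv K n) ^ 2 := by
  have h : sMk K n ((X 0 : MvPolynomial (Fin 2) K) ^ (n - 2) - X 1 ^ 2) = 0 :=
    Ideal.Quotient.eq_zero_iff_mem.mpr (Ideal.subset_span (Set.mem_singleton _))
  rw [map_sub, sub_eq_zero, map_pow, map_pow] at h
  exact h

lemma tv_sq (hn : 3 ≤ n) : (tv K n) ^ 2 = (Xv K n) ^ n := by
  rw [tv_def, mul_pow, ← rel K n, ← pow_add]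
  congr 1
  omega

lemma tv_mul_Yv (hn : 3 ≤ n) : tv K n * Yv K n = (Xv K n) ^ (n - 1) := by
  rw [tv_def, mul_assoc, ← sq, ← rel K n, ← pow_succ']
  congr 1
  omega

def gam (r : ZMod n) : ℕ := if r.val = n - 1 then n - 2 else 2 * r.val

def gen (r : ZMod n) : SRing K n := if r.val = n - 1 then Yv K n else (Xv K n) ^ r.val

def sOf (r : ZMod n) (p : Polynomial K) : SRing K n :=
  gen K n r * Polynomial.aeval (tv K n) p

def etaP : MvPolynomial (Fin 2) K →ₐ[K] RatFunc K :=
  MvPolynomial.aeval ![RatFunc.X ^ 2, RatFunc.X ^ (n - 2)]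

lemma etaP_vanish : ∀ a ∈ Ideal.span {(X 0 : MvPolynomial (Fin 2) K) ^ (n - 2) - X 1 ^ 2},
    etaP K n a = 0 := by
  intro a ha
  rw [Ideal.mem_span_singleton] at ha
  obtain ⟨c, rfl⟩ := ha
  rw [_root_.map_mul]
  have : etaP K n ((X 0 : MvPolynomial (Fin 2) K) ^ (n - 2) - X 1 ^ 2) = 0 := by
    simp only [etaP, map_sub, map_pow, MvPolynomial.aeval_X,
      Matrix.cons_val_zero, Matrix.cons_val_one, Matrix.head_cons]
    rw [← pow_mul, ← pow_mul, mul_comm, sub_self]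
  rw [this, zero_mul]

def etaS : SRing K n →ₐ[K] RatFunc K :=
  Ideal.Quotient.liftₐ _ (etaP K n) (etaP_vanish K n)

lemma etaS_mk (q : MvPolynomial (Fin 2) K) : etaS K n (sMk K n q) = etaP K n q := by
  simp [etaS, Ideal.Quotient.liftₐ_apply, sMk, Ideal.Quotient.lift_mk]
  rfl

lemma etaS_Xv : etaS K n (Xv K n) = RatFunc.X ^ 2 := by
  rw [Xv, etaS_mk]; simp [etaP]

lemma etaS_Yv : etaS K n (Yv K n) = RatFunc.X ^ (n - 2) := by
  rw [Yv, etaS_mk]; simp [etaP]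

lemma etaS_tv (hn : 3 ≤ n) : etaS K n (tv K n) = RatFunc.X ^ n := by
  rw [tv_def, _root_.map_mul, etaS_Xv, etaS_Yv, ← pow_add]
  congr 1
  omega

def iota0 : Polynomial K →ₐ[K] RatFunc K := Polynomial.aeval ((RatFunc.X : RatFunc K) ^ n)

lemma iota0_inj (hn : 3 ≤ n) : Function.Injective (iota0 K n) := by
  rw [injective_iff_map_eq_zero]
  intro p hp
  have hX : ((algebraMap (Polynomial K) (RatFunc K)) (Polynomial.X)) = RatFunc.X :=
    RatFunc.algebraMap_X
  have : (iota0 K n) p =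
      (IsScalarTower.toAlgHom K (Polynomial K) (RatFunc K)) (p.comp (Polynomial.X ^ n)) := by
    rw [comp_eq_aeval, ← Polynomial.aeval_algHom_apply]
    simp only [iota0, map_pow, IsScalarTower.coe_toAlgHom', hX]
  rw [this] at hp
  have h0 : p.comp (Polynomial.X ^ n) = 0 := by
    exact RatFunc.algebraMap_injective K (by simpa using hp)
  rw [Polynomial.comp_eq_zero_iff] at h0
  rcases h0 with h | ⟨_, h⟩
  · exact h
  · exfalso
    have := congrArg Polynomial.natDegree h
    rw [Polynomial.natDegree_X_pow, Polynomial.natDegree_C] at this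
    omega

lemma etaS_sOf (hn : 3 ≤ n) (r : ZMod n) (p : Polynomial K) :
    etaS K n (sOf K n r p) = RatFunc.X ^ (gam n r) * iota0 K n p := by
  rw [sOf, _root_.map_mul]
  congr 1
  · rw [gen, gam]
    split_ifs with h
    · exact etaS_Yv K n
    · rw [map_pow, etaS_Xv, ← pow_mul, mul_comm]
  · rw [← Polynomial.aeval_algHom_apply, etaS_tv K n hn, iota0]

end Stmt14

namespace Stmt14

variable (K : Type) [Field K] (n : ℕ)

lemma reduce_even (c m : ℕ) :
    sMk K n (X 0 ^ c * X 1 ^ (2 * m)) = Xv K n ^ (c + (n - 2) * m) := by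
  rw [_root_.map_mul, map_pow, map_pow]
  show Xv K n ^ c * Yv K n ^ (2 * m) = _
  rw [pow_mul, ← rel K n]
  ring

lemma reduce_odd (c m : ℕ) :
    sMk K n (X 0 ^ c * X 1 ^ (2 * m + 1)) = Xv K n ^ (c + (n - 2) * m) * Yv K n := by
  rw [_root_.map_mul, map_pow, map_pow]
  show Xv K n ^ c * Yv K n ^ (2 * m + 1) = _
  rw [pow_succ (Yv K n) (2 * m), pow_mul, ← rel K n]
  ring

lemma xpow_eq_sOf (hn : 3 ≤ n) (r : ZMod n) (e : ℕ) (he : ((e : ℕ) : ZMod n) = r) :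
    ∃ p, Xv K n ^ e = sOf K n r p := by
  haveI : NeZero n := ⟨by omega⟩
  have hv : e % n = r.val := by rw [← he, ZMod.val_natCast]
  have hdm := Nat.div_add_mod e n
  have hrlt : r.val < n := ZMod.val_lt r
  by_cases h : r.val = n - 1
  · obtain ⟨k, hk⟩ : ∃ k, e = n * k + (n - 1) := ⟨e / n, by omega⟩
    refine ⟨Polynomial.X ^ (2 * k + 1), ?_⟩
    rw [sOf, gen, if_pos h, map_pow, Polynomial.aeval_X]
    calc Xv K n ^ e = Xv K n ^ (n * k) * Xv K n ^ (n - 1) := by rw [hk, pow_add]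
      _ = (Xv K n ^ n) ^ k * (tv K n * Yv K n) := by rw [← pow_mul, tv_mul_Yv K n hn]
      _ = (tv K n ^ 2) ^ k * (tv K n * Yv K n) := by rw [tv_sq K n hn]
      _ = Yv K n * tv K n ^ (2 * k + 1) := by ring
  · obtain ⟨k, hk⟩ : ∃ k, e = n * k + r.val := ⟨e / n, by omega⟩
    refine ⟨Polynomial.X ^ (2 * k), ?_⟩
    rw [sOf, gen, if_neg h, map_pow, Polynomial.aeval_X]
    calc Xv K n ^ e = (Xv K n ^ n) ^ k * Xv K n ^ r.val := by rw [hk, pow_add, pow_mul]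
      _ = (tv K n ^ 2) ^ k * Xv K n ^ r.val := by rw [tv_sq K n hn]
      _ = Xv K n ^ r.val * tv K n ^ (2 * k) := by ring

lemma xpowY_eq_sOf (hn : 3 ≤ n) (r : ZMod n) (e : ℕ) (he : ((e : ℕ) : ZMod n) = r + 1) :
    ∃ p, Xv K n ^ e * Yv K n = sOf K n r p := by
  haveI : NeZero n := ⟨by omega⟩
  have hv : e % n = (r + 1).val := by rw [← he, ZMod.val_natCast]
  have hdm := Nat.div_add_mod e n
  have hrlt : r.val < n := ZMod.val_lt r
  by_cases h : r.val = n - 1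
  · have hr1 : r + 1 = 0 := by
      have h1 : ((r.val : ℕ) : ZMod n) = r := ZMod.natCast_rightInverse r
      rw [← h1, h]
      have h2 : ((n - 1 : ℕ) : ZMod n) = (n : ZMod n) - 1 := by
        push_cast [Nat.cast_sub (show 1 ≤ n by omega)]; ring
      rw [h2, ZMod.natCast_self]
      ring
    rw [hr1, ZMod.val_zero] at hv
    obtain ⟨k, hk⟩ : ∃ k, e = n * k := ⟨e / n, by omega⟩
    refine ⟨Polynomial.X ^ (2 * k), ?_⟩
    rw [sOf, gen, if_pos h, map_pow, Polynomial.aeval_X]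
    calc Xv K n ^ e * Yv K n = (Xv K n ^ n) ^ k * Yv K n := by rw [hk, pow_mul]
      _ = (tv K n ^ 2) ^ k * Yv K n := by rw [tv_sq K n hn]
      _ = Yv K n * tv K n ^ (2 * k) := by ring
  · have hv1 : (r + 1).val = r.val + 1 := by
      have h1 : ((r.val + 1 : ℕ) : ZMod n) = r + 1 := by
        push_cast
        rw [ZMod.natCast_rightInverse r]
      rw [← h1, ZMod.val_natCast, Nat.mod_eq_of_lt (by omega)]
    rw [hv1] at hv
    obtain ⟨k, hk⟩ : ∃ k, e = n * k + r.val + 1 := ⟨e / n, by omega⟩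
    refine ⟨Polynomial.X ^ (2 * k + 1), ?_⟩
    rw [sOf, gen, if_neg h, map_pow, Polynomial.aeval_X]
    calc Xv K n ^ e * Yv K n
        = (Xv K n ^ n) ^ k * Xv K n ^ r.val * (Xv K n * Yv K n) := by
          rw [hk, pow_add, pow_add, pow_one, pow_mul]; ring
      _ = (tv K n ^ 2) ^ k * Xv K n ^ r.val * tv K n := by
          rw [tv_sq K n hn, tv_def]
      _ = Xv K n ^ r.val * tv K n ^ (2 * k + 1) := by ring

lemma mem_sdeg_exists (hn : 3 ≤ n) {r : ZMod n} {s : SRing K n} (hs : s ∈ Sdeg K n r) :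
    ∃ p, s = sOf K n r p := by
  haveI : NeZero n := ⟨by omega⟩
  refine Submodule.span_induction ?_ ⟨0, by simp [sOf]⟩ ?_ ?_ hs
  · rintro x ⟨c, d, hcd, rfl⟩
    obtain ⟨m, rfl | rfl⟩ : ∃ m, d = 2 * m ∨ d = 2 * m + 1 := ⟨d / 2, by omega⟩
    · rw [reduce_even]
      refine (xpow_eq_sOf K n hn r _ ?_).imp fun p hp => hp
      push_cast [Nat.cast_sub (show 2 ≤ n by omega)] at hcd ⊢
      rw [ZMod.natCast_self]
      linear_combination hcd
    · rw [reduce_odd]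
      refine (xpowY_eq_sOf K n hn r _ ?_).imp fun p hp => hp
      push_cast [Nat.cast_sub (show 2 ≤ n by omega)] at hcd ⊢
      rw [ZMod.natCast_self]
      linear_combination hcd
  · rintro x y - - ⟨p, rfl⟩ ⟨q, rfl⟩
    exact ⟨p + q, by rw [sOf, sOf, sOf, map_add, mul_add]⟩
  · rintro a x - ⟨p, rfl⟩
    refine ⟨a • p, ?_⟩
    rw [sOf, sOf, _root_.map_smul, mul_smul_comm]

lemma gen_tv_mem (hn : 3 ≤ n) (r : ZMod n) (k : ℕ) :
    gen K n r * tv K n ^ k ∈ Sdeg K n r := by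
  haveI : NeZero n := ⟨by omega⟩
  apply Submodule.subset_span
  by_cases h : r.val = n - 1
  · refine ⟨k, k + 1, ?_, ?_⟩
    · have h1 : ((r.val : ℕ) : ZMod n) = r := ZMod.natCast_rightInverse r
      rw [← h1, h]
      push_cast [Nat.cast_sub (show 1 ≤ n by omega)]
      rw [ZMod.natCast_self]
      ring
    · simp only [gen, if_pos h, Yv, tv, ← map_pow, ← _root_.map_mul]
      congr 1
      ring
  · refine ⟨r.val + k, k, ?_, ?_⟩
    · push_cast
      rw [ZMod.natCast_rightInverse r]
      ring
    · simp only [gen, if_neg h, Xv, tv, ← map_pow, ← _root_.map_mul]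
      congr 1
      ring

lemma sOf_mem (hn : 3 ≤ n) (r : ZMod n) (p : Polynomial K) :
    sOf K n r p ∈ Sdeg K n r := by
  induction p using Polynomial.induction_on' with
  | add p q hp hq =>
      rw [sOf, map_add, mul_add]
      exact Submodule.add_mem _ hp hq
  | monomial k a =>
      rw [sOf, Polynomial.aeval_monomial, ← mul_assoc, mul_comm (gen K n r), mul_assoc,
        ← Algebra.smul_def]
      exact Submodule.smul_mem _ _ (gen_tv_mem K n hn r k)

end Stmt14

namespace Stmt14

variable (K : Type) [Field K] (n : ℕ)

lemma sdeg_mul {i j : ZMod n} {s u : SRing K n} (hs : s ∈ Sdeg K n i) (hu : u ∈ Sdeg K n j) :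
    s * u ∈ Sdeg K n (i + j) := by
  refine Submodule.span_induction ?_ ?_ ?_ ?_ hs
  · rintro x ⟨c, d, hcd, rfl⟩
    refine Submodule.span_induction ?_ ?_ ?_ ?_ hu
    · rintro y ⟨c', d', hcd', rfl⟩
      apply Submodule.subset_span
      refine ⟨c + c', d + d', ?_, ?_⟩
      · push_cast; rw [← hcd, ← hcd']; ring
      · rw [← _root_.map_mul]; congr 1; ring
    · rw [mul_zero]; exact zero_mem _
    · intro x' y' _ _ hx hy; rw [mul_add]; exact add_mem hx hy
    · intro a x' _ hx; rw [mul_smul_comm]; exact Submodule.smul_mem _ _ hx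
  · rw [zero_mul]; exact zero_mem _
  · intro x y _ _ hx hy; rw [add_mul]; exact add_mem hx hy
  · intro a x _ hx; rw [smul_mul_assoc]; exact Submodule.smul_mem _ _ hx

lemma one_mem_sdeg : (1 : SRing K n) ∈ Sdeg K n 0 := by
  apply Submodule.subset_span
  exact ⟨0, 0, by simp, by simp⟩

def AA : Subalgebra K (Matrix (Fin n) (Fin n) (SRing K n)) where
  carrier := snSet K n
  mul_mem' := by
    intro m m' hm hm' a c
    rw [Matrix.mul_apply]
    apply Submodule.sum_mem
    intro b _
    have h := sdeg_mul K n (hm a b) (hm' b c)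
    rwa [show (((b:ℕ):ZMod n) - ((a:ℕ):ZMod n)) + ((((c:ℕ)):ZMod n) - ((b:ℕ):ZMod n))
      = (((c:ℕ)):ZMod n) - ((a:ℕ):ZMod n) by ring] at h
  one_mem' := by
    intro a b
    rw [Matrix.one_apply]
    split_ifs with h
    · subst h; rw [sub_self]; exact one_mem_sdeg K n
    · exact zero_mem _
  add_mem' := by
    intro m m' hm hm' a b
    exact add_mem (hm a b) (hm' a b)
  zero_mem' := by
    intro a b
    exact zero_mem _
  algebraMap_mem' := by
    intro k a b
    rw [Matrix.algebraMap_matrix_apply]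
    split_ifs with h
    · subst h; rw [sub_self, Algebra.algebraMap_eq_smul_one]
      exact Submodule.smul_mem _ _ (one_mem_sdeg K n)
    · exact zero_mem _

def theta : Matrix (Fin n) (Fin n) (SRing K n) →ₐ[K] Matrix (Fin n) (Fin n) (RatFunc K) where
  toFun m := Matrix.of fun a b =>
    (RatFunc.X : RatFunc K) ^ (2*((a:ℕ):ℤ) - 2*((b:ℕ):ℤ)) * etaS K n (m a b)
  map_one' := by
    ext a b
    simp only [Matrix.of_apply, Matrix.one_apply]
    split_ifs with h
    · subst h; rw [sub_self, zpow_zero, one_mul, _root_.map_one]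
    · rw [map_zero, mul_zero]
  map_mul' m m' := by
    ext a c
    simp only [Matrix.of_apply, Matrix.mul_apply, map_sum, Finset.mul_sum]
    refine Finset.sum_congr rfl fun b _ => ?_
    rw [_root_.map_mul,
      show (2*((a:ℕ):ℤ) - 2*((c:ℕ):ℤ))
        = (2*((a:ℕ):ℤ) - 2*((b:ℕ):ℤ)) + (2*((b:ℕ):ℤ) - 2*((c:ℕ):ℤ)) by ring,
      zpow_add₀ (RatFunc.X_ne_zero)]
    ring
  map_zero' := by
    ext a b
    simp only [Matrix.of_apply, Matrix.zero_apply, map_zero, mul_zero]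
  map_add' m m' := by
    ext a b
    simp only [Matrix.of_apply, Matrix.add_apply, map_add, mul_add]
  commutes' k := by
    ext a b
    simp only [Matrix.of_apply, Matrix.algebraMap_matrix_apply]
    split_ifs with h
    · subst h; rw [sub_self, zpow_zero, one_mul, AlgHom.commutes]
    · rw [map_zero, mul_zero]

lemma theta_apply (m : Matrix (Fin n) (Fin n) (SRing K n)) (a b : Fin n) :
    theta K n m a b
      = (RatFunc.X : RatFunc K) ^ (2*((a:ℕ):ℤ) - 2*((b:ℕ):ℤ)) * etaS K n (m a b) := rfl

def iota (hn : 3 ≤ n) : RatFunc K →ₐ[K] RatFunc K :=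
  IsFractionRing.liftAlgHom (g := iota0 K n) (iota0_inj K n hn)

lemma iota_algebraMap (hn : 3 ≤ n) (p : Polynomial K) :
    iota K n hn (algebraMap (Polynomial K) (RatFunc K) p) = iota0 K n p := by
  rw [iota, IsFractionRing.liftAlgHom_apply, IsFractionRing.lift_algebraMap]
  rfl

lemma iota_X (hn : 3 ≤ n) : iota K n hn RatFunc.X = (RatFunc.X : RatFunc K) ^ n := by
  have h := iota_algebraMap K n hn Polynomial.X
  rw [RatFunc.algebraMap_X] at h
  rw [h, iota0, Polynomial.aeval_X]

lemma iota_inj (hn : 3 ≤ n) : Function.Injective (iota K n hn) :=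
  (iota K n hn).toRingHom.injective

lemma iota_xc (hn : 3 ≤ n) (c : ℤ) (p : Polynomial K) :
    iota K n hn ((RatFunc.X : RatFunc K) ^ c * algebraMap (Polynomial K) (RatFunc K) p)
      = (RatFunc.X : RatFunc K) ^ ((n:ℤ) * c) * iota0 K n p := by
  rw [_root_.map_mul, map_zpow₀, iota_X, iota_algebraMap]
  congr 1
  rw [← zpow_natCast (RatFunc.X : RatFunc K) n, ← _root_.zpow_mul]

lemma r_val (hn : 3 ≤ n) (a b : Fin n) :
    ((((b:ℕ)) : ZMod n) - (((a:ℕ)) : ZMod n)).val = ((b:ℕ) + (n - (a:ℕ))) % n := by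
  haveI : NeZero n := ⟨by omega⟩
  have h : (((b:ℕ)) : ZMod n) - (((a:ℕ)) : ZMod n) = ((((b:ℕ)) + (n - ((a:ℕ))) : ℕ) : ZMod n) := by
    push_cast [Nat.cast_sub (le_of_lt a.isLt)]
    rw [ZMod.natCast_self]
    ring
  rw [h, ZMod.val_natCast]

lemma key (hn : 3 ≤ n) (a b : Fin n) :
    (2*((a:ℕ):ℤ) - 2*((b:ℕ):ℤ)) + (gam n ((((b:ℕ)):ZMod n) - (((a:ℕ)):ZMod n)) : ℤ)
      = (n:ℤ) * cExp n a b := by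
  haveI : NeZero n := ⟨by omega⟩
  have ha := a.isLt
  have hb := b.isLt
  have hval := r_val n hn a b
  rcases le_or_gt (a:ℕ) (b:ℕ) with h | h
  · have h1 : ((b:ℕ) + (n - (a:ℕ))) % n = (b:ℕ) - (a:ℕ) := by
      have h2 : (b:ℕ) + (n - (a:ℕ)) = ((b:ℕ) - (a:ℕ)) + n := by omega
      rw [h2, Nat.add_mod_right, Nat.mod_eq_of_lt (by omega)]
    rw [h1] at hval
    simp only [gam, cExp, hval]
    split_ifs <;> omega
  · have h1 : ((b:ℕ) + (n - (a:ℕ))) % n = (b:ℕ) + (n - (a:ℕ)) := Nat.mod_eq_of_lt (by omega)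
    rw [h1] at hval
    simp only [gam, cExp, hval]
    split_ifs <;> omega

lemma key_zpow (hn : 3 ≤ n) (a b : Fin n) :
    (RatFunc.X : RatFunc K) ^ (2*((a:ℕ):ℤ) - 2*((b:ℕ):ℤ))
        * (RatFunc.X : RatFunc K) ^ (gam n ((((b:ℕ)):ZMod n) - (((a:ℕ)):ZMod n)) : ℕ)
      = (RatFunc.X : RatFunc K) ^ ((n:ℤ) * cExp n a b) := by
  rw [← zpow_natCast (RatFunc.X : RatFunc K) (gam n _), ← zpow_add₀ (RatFunc.X_ne_zero),
    ← key n hn a b]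

lemma theta_entry_eq (hn : 3 ≤ n) (a b : Fin n) (p : Polynomial K) :
    (RatFunc.X : RatFunc K) ^ (2*((a:ℕ):ℤ) - 2*((b:ℕ):ℤ))
        * etaS K n (sOf K n ((((b:ℕ)):ZMod n) - (((a:ℕ)):ZMod n)) p)
      = iota K n hn ((RatFunc.X : RatFunc K) ^ (cExp n a b)
          * algebraMap (Polynomial K) (RatFunc K) p) := by
  rw [etaS_sOf K n hn, iota_xc K n hn, ← mul_assoc, key_zpow K n hn]

end Stmt14

namespace Stmt14

variable (K : Type) [Field K] (n : ℕ)

def Phi : ↥(AA K n) →ₐ[K] Matrix (Fin n) (Fin n) (RatFunc K) :=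
  (theta K n).comp (Subalgebra.val _)

def Psi (Λ : Subalgebra (Polynomial K) (Matrix (Fin n) (Fin n) (RatFunc K))) (hn : 3 ≤ n) :
    ↥Λ →ₐ[K] Matrix (Fin n) (Fin n) (RatFunc K) :=
  (AlgHom.mapMatrix (iota K n hn)).comp ((Subalgebra.val Λ).restrictScalars K)

lemma Phi_inj (hn : 3 ≤ n) : Function.Injective (Phi K n) := by
  intro m m' h
  apply Subtype.ext
  ext a b
  have he : theta K n ↑m a b = theta K n ↑m' a b := by
    rw [show theta K n ↑m = theta K n ↑m' from h]
  rw [theta_apply, theta_apply] at he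
  have he2 : etaS K n ((↑m : Matrix (Fin n) (Fin n) (SRing K n)) a b)
      = etaS K n ((↑m' : Matrix (Fin n) (Fin n) (SRing K n)) a b) :=
    mul_left_cancel₀ (zpow_ne_zero _ RatFunc.X_ne_zero) he
  obtain ⟨p, hp⟩ := mem_sdeg_exists K n hn (m.2 a b)
  obtain ⟨p', hp'⟩ := mem_sdeg_exists K n hn (m'.2 a b)
  rw [hp, hp', etaS_sOf K n hn, etaS_sOf K n hn] at he2
  have hpp : p = p' :=
    iota0_inj K n hn (mul_left_cancel₀ (pow_ne_zero _ RatFunc.X_ne_zero) he2)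
  rw [hp, hp', hpp]

lemma mapMatrix_iota_inj (hn : 3 ≤ n) :
    Function.Injective
      ((iota K n hn).mapMatrix :
        Matrix (Fin n) (Fin n) (RatFunc K) →ₐ[K] Matrix (Fin n) (Fin n) (RatFunc K)) := by
  intro M M' h
  ext a b
  apply iota_inj K n hn
  have h2 := congrArg (fun N : Matrix (Fin n) (Fin n) (RatFunc K) => N a b) h
  simpa [AlgHom.mapMatrix_apply, Matrix.map_apply] using h2

lemma Psi_inj (Λ : Subalgebra (Polynomial K) (Matrix (Fin n) (Fin n) (RatFunc K)))
    (hn : 3 ≤ n) : Function.Injective (Psi K n Λ hn) := by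
  intro M M' h
  exact Subtype.ext (mapMatrix_iota_inj K n hn h)

lemma range_eq (hn : 3 ≤ n) (Λ : Subalgebra (Polynomial K) (Matrix (Fin n) (Fin n) (RatFunc K)))
    (hΛ : (Λ : Set (Matrix (Fin n) (Fin n) (RatFunc K))) = lambdaCarrier K n) :
    (Phi K n).range = (Psi K n Λ hn).range := by
  apply le_antisymm
  · rintro N ⟨m, rfl⟩
    have hm : ∀ a b : Fin n, ∃ p : Polynomial K,
        (↑m : Matrix (Fin n) (Fin n) (SRing K n)) a b
          = sOf K n ((((b:ℕ)):ZMod n) - (((a:ℕ)):ZMod n)) p :=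
      fun a b => mem_sdeg_exists K n hn (m.2 a b)
    choose p hp using hm
    have hMΛ : (Matrix.of fun a b => (RatFunc.X : RatFunc K) ^ (cExp n a b)
        * algebraMap (Polynomial K) (RatFunc K) (p a b)) ∈ Λ := by
      rw [← SetLike.mem_coe, hΛ]
      exact fun a b => ⟨p a b, rfl⟩
    rw [AlgHom.mem_range]
    refine ⟨⟨_, hMΛ⟩, ?_⟩
    ext a b
    show iota K n hn _ = theta K n ↑m a b
    rw [theta_apply, hp a b, theta_entry_eq K n hn]
    rfl
  · rintro N ⟨M, rfl⟩
    have hM : ∀ a b : Fin n, ∃ p : Polynomial K,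
        (↑M : Matrix (Fin n) (Fin n) (RatFunc K)) a b
          = (RatFunc.X : RatFunc K) ^ (cExp n a b)
              * algebraMap (Polynomial K) (RatFunc K) p := by
      intro a b
      have h2 := M.2
      rw [← SetLike.mem_coe, hΛ] at h2
      exact h2 a b
    choose p hp using hM
    have hm0 : (Matrix.of fun a b : Fin n =>
        sOf K n ((((b:ℕ)):ZMod n) - (((a:ℕ)):ZMod n)) (p a b)) ∈ AA K n :=
      fun a b => sOf_mem K n hn _ _
    rw [AlgHom.mem_range]
    refine ⟨⟨_, hm0⟩, ?_⟩
    ext a b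
    show theta K n _ a b = iota K n hn ((↑M : Matrix (Fin n) (Fin n) (RatFunc K)) a b)
    rw [theta_apply, hp a b]
    exact theta_entry_eq K n hn a b (p a b)

end Stmt14


/-- `S^{[n]}` is a `K`-subalgebra of `M_n(S)` and there is a `K`-algebra isomorphism
`S^{[n]} → Λ` sending `π(X·Y)·Id` to `x·Id`. -/
theorem statement14 (K : Type) [Field K] (n : ℕ) (hn : 3 ≤ n)
    (Λ : Subalgebra (Polynomial K) (Matrix (Fin n) (Fin n) (RatFunc K)))
    (hΛ : (Λ : Set (Matrix (Fin n) (Fin n) (RatFunc K))) = lambdaCarrier K n) :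
    ∃ A : Subalgebra K (Matrix (Fin n) (Fin n) (SRing K n)),
      (A : Set (Matrix (Fin n) (Fin n) (SRing K n))) = snSet K n ∧
      ∃ e : ↥A ≃ₐ[K] ↥Λ,
        ∀ m : ↥A,
          (↑m : Matrix (Fin n) (Fin n) (SRing K n))
              = sMk K n ((X 0 : MvPolynomial (Fin 2) K) * X 1) •
                  (1 : Matrix (Fin n) (Fin n) (SRing K n)) →
          (↑(e m) : Matrix (Fin n) (Fin n) (RatFunc K))
              = (RatFunc.X : RatFunc K) • (1 : Matrix (Fin n) (Fin n) (RatFunc K)) := by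
  classical
  refine ⟨Stmt14.AA K n, rfl, ?_⟩
  have hPhi := Stmt14.Phi_inj K n hn
  have hPsi := Stmt14.Psi_inj K n Λ hn
  have hr := Stmt14.range_eq K n hn Λ hΛ
  refine ⟨(AlgEquiv.ofInjective _ hPhi).trans
      ((Subalgebra.equivOfEq _ _ hr).trans (AlgEquiv.ofInjective _ hPsi).symm), ?_⟩
  intro m hm
  set e : ↥(Stmt14.AA K n) ≃ₐ[K] ↥Λ := (AlgEquiv.ofInjective _ hPhi).trans
      ((Subalgebra.equivOfEq _ _ hr).trans (AlgEquiv.ofInjective _ hPsi).symm) with hedef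
  have h1 : Stmt14.Psi K n Λ hn (e m) = Stmt14.Phi K n m := by
    have hw : ∀ w : ↥(Stmt14.Psi K n Λ hn).range,
        Stmt14.Psi K n Λ hn ((AlgEquiv.ofInjective _ hPsi).symm w) = ↑w := by
      intro w
      conv_rhs => rw [← AlgEquiv.apply_symm_apply (AlgEquiv.ofInjective _ hPsi) w]
      rw [AlgEquiv.ofInjective_apply]
    rw [hedef, AlgEquiv.trans_apply, AlgEquiv.trans_apply, hw]
    rw [show ((Subalgebra.equivOfEq _ _ hr) (AlgEquiv.ofInjective _ hPhi m)
        : Matrix (Fin n) (Fin n) (RatFunc K))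
      = ((AlgEquiv.ofInjective _ hPhi m : ↥(Stmt14.Phi K n).range)
        : Matrix (Fin n) (Fin n) (RatFunc K)) from rfl]
    rw [AlgEquiv.ofInjective_apply]
  have h2 : Stmt14.Phi K n m
      = (Stmt14.iota K n hn).mapMatrix
          ((RatFunc.X : RatFunc K) • (1 : Matrix (Fin n) (Fin n) (RatFunc K))) := by
    show Stmt14.theta K n ↑m = _
    rw [hm]
    ext a b
    rw [Stmt14.theta_apply, AlgHom.mapMatrix_apply, Matrix.map_apply]
    simp only [Matrix.smul_apply, Matrix.one_apply, smul_eq_mul]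
    split_ifs with h
    · subst h
      rw [sub_self, zpow_zero, one_mul, mul_one, mul_one]
      rw [show sMk K n ((X 0 : MvPolynomial (Fin 2) K) * X 1) = Stmt14.tv K n from rfl]
      rw [Stmt14.etaS_tv K n hn, Stmt14.iota_X K n hn]
    · rw [mul_zero, mul_zero, map_zero, map_zero, mul_zero]
  have h3 : (Stmt14.iota K n hn).mapMatrix ((↑(e m) : Matrix (Fin n) (Fin n) (RatFunc K)))
      = Stmt14.Psi K n Λ hn (e m) := rfl
  apply Stmt14.mapMatrix_iota_inj K n hn
  rw [h3, h1, h2]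
end
end
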